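/- arXiv:1405.2225 — 6 statements merged into one kernel-verified Lean document; each statement's English description precedes it below -/
import Mathlib

section
/- Let Σ be a split system on a finite set X with |X| ≥ 2. Then there exists a weak X-tree T with Σ(T) = Σ (equality of multisets) if and only if Σ is compatible. -/
open scoped Classical

/-- A weak X-tree: a finite tree together with a labelling map `lab : X → V`
such that every degree-one vertex (i.e. vertex with a unique neighbour) is labelled. -/
structure WeakXTree (X : Type) [Fintype X] [DecidableEq X] where
  V : Type
  [fintypeV : Fintype V]
  [decEqV : DecidableEq V]
  G : SimpleGraph V
  isTree : G.IsTree
  lab : X → V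
  leaf_labelled : ∀ v : V, (∃! w : V, G.Adj v w) → v ∈ Set.range lab

attribute [instance] WeakXTree.fintypeV WeakXTree.decEqV

variable {X : Type} [Fintype X] [DecidableEq X]

namespace WeakXTree

/-- A leaf is a vertex with a unique neighbour (degree one). -/
def IsLeaf (T : WeakXTree X) (v : T.V) : Prop := ∃! w : T.V, T.G.Adj v w

/-- The split of `X` displayed by an edge `e` of the tree: the (two) sets
`φ⁻¹(V₁)`, `φ⁻¹(V₂)` where `V₁, V₂` are the components of `T ∖ e`. -/
noncomputable def splitOf (T : WeakXTree X) (e : Sym2 T.V) : Finset (Finset X) :=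
  Finset.image (fun u : T.V =>
    Finset.univ.filter (fun x : X => (T.G.deleteEdges {e}).Reachable u (T.lab x)))
    Finset.univ

/-- The multiset of splits displayed by the edges of a weak X-tree. -/
noncomputable def splits (T : WeakXTree X) : Multiset (Finset (Finset X)) :=
  T.G.edgeFinset.val.map T.splitOf

end WeakXTree

/-- A partition of `X`: nonempty parts, every element of `X` in exactly one part. -/
def IsPartition (π : Finset (Finset X)) : Prop :=
  (∀ A ∈ π, A.Nonempty) ∧ ∀ x : X, ∃! A : Finset X, A ∈ π ∧ x ∈ A

/-- A split of `X` is a partition of `X` into exactly two parts. -/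
def IsSplit (σ : Finset (Finset X)) : Prop := IsPartition σ ∧ σ.card = 2

/-- A split system on `X` is a multiset of splits of `X`. -/
def IsSplitSystem (S : Multiset (Finset (Finset X))) : Prop := ∀ σ ∈ S, IsSplit σ

/-- Two splits `{A₁,B₁}` and `{A₂,B₂}` are compatible if one of the four
intersections of a part of one with a part of the other is empty. -/
def SplitsCompatible (σ₁ σ₂ : Finset (Finset X)) : Prop :=
  ∃ A ∈ σ₁, ∃ B ∈ σ₂, A ∩ B = ∅

/-- A split system is compatible if its splits are pairwise compatible. -/
def CompatibleSystem (S : Multiset (Finset (Finset X))) : Prop :=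
  ∀ σ₁ ∈ S, ∀ σ₂ ∈ S, SplitsCompatible σ₁ σ₂

/-- A partition system on `X`: a multiset of partitions of `X` into at least two parts. -/
def IsPartitionSystem (P : Multiset (Finset (Finset X))) : Prop :=
  ∀ π ∈ P, IsPartition π ∧ 2 ≤ π.card

/-- The multiset of splits `{A, X − A}` for `A` a part of the partition `π`. -/
def partitionSplits (π : Finset (Finset X)) : Multiset (Finset (Finset X)) :=
  π.val.map (fun A => ({A, Aᶜ} : Finset (Finset X)))

/-- `Σ_Π`: the multiset union over `π ∈ Π` of the splits `{A, X − A}`, `A ∈ π`. -/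
def systemSplits (P : Multiset (Finset (Finset X))) : Multiset (Finset (Finset X)) :=
  P.bind partitionSplits

/-- A partition system is strongly compatible if any two of its partitions are
equal or have parts whose union is `X`. -/
def StronglyCompatible (P : Multiset (Finset (Finset X))) : Prop :=
  ∀ π₁ ∈ P, ∀ π₂ ∈ P, π₁ = π₂ ∨ ∃ A ∈ π₁, ∃ B ∈ π₂, A ∪ B = Finset.univ

namespace WeakXTree

/-- A weak X-tree is even if all pairwise distances between labelled vertices are even. -/
def IsEven (T : WeakXTree X) : Prop :=
  ∀ x y : X, Even (T.G.dist (T.lab x) (T.lab y))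

/-- A vertex of a weak X-tree is even if it has even distance to some leaf. -/
def EvenVertex (T : WeakXTree X) (v : T.V) : Prop :=
  ∃ l : T.V, T.IsLeaf l ∧ Even (T.G.dist v l)

/-- A set `E` of edges of `T` displays the partition `π` if there is a bijection
`ξ : π → E` with `σ_{ξ(A)} = {A, X − A}` for each part `A ∈ π`. -/
def Displays (T : WeakXTree X) (E : Finset (Sym2 T.V)) (π : Finset (Finset X)) : Prop :=
  ↑E ⊆ T.G.edgeSet ∧ ∃ ξ : Finset X → Sym2 T.V,
    Set.BijOn ξ ↑π ↑E ∧ ∀ A ∈ π, T.splitOf (ξ A) = {A, Aᶜ}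

/-- The partition `π(v)` displayed by a vertex `v`: `x` and `y` are in the same
part iff the path from `φ(x)` to `φ(y)` does not pass through `v`. -/
noncomputable def vertexPartition (T : WeakXTree X) (v : T.V) : Finset (Finset X) :=
  Finset.image (fun x : X => Finset.univ.filter (fun y : X =>
    ∀ p : T.G.Walk (T.lab x) (T.lab y), p.IsPath → v ∉ p.support)) Finset.univ

end WeakXTree

set_option linter.unusedSectionVars false
set_option maxHeartbeats 1000000

namespace SplitsEq
variable {X : Type} [Fintype X] [DecidableEq X]
variable {n : ℕ}

/-- strict "below" order on indices of a laminar family -/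
def slt (A : Fin n → Finset X) (i j : Fin n) : Prop :=
  A i ⊂ A j ∨ (A i = A j ∧ i < j)

def sle (A : Fin n → Finset X) (i j : Fin n) : Prop := i = j ∨ slt A i j

def key (A : Fin n → Finset X) (i : Fin n) : ℕ ×ₗ ℕ := toLex ((A i).card, (i : ℕ))

variable {A : Fin n → Finset X}

lemma key_lt_of_slt {i j : Fin n} (h : slt A i j) : key A i < key A j := by
  rcases h with h | ⟨h1, h2⟩
  · exact Prod.Lex.lt_iff.mpr (Or.inl (Finset.card_lt_card h))
  · exact Prod.Lex.lt_iff.mpr (Or.inr ⟨congrArg Finset.card h1, h2⟩)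

lemma slt_irrefl {i : Fin n} : ¬ slt A i i := fun h => lt_irrefl _ (key_lt_of_slt h)

lemma ssubset_or_eq {B C : Finset X} (h : B ⊆ C) : B ⊂ C ∨ B = C := by
  rcases eq_or_ne B C with he | he
  · exact Or.inr he
  · exact Or.inl (Finset.ssubset_iff_subset_ne.mpr ⟨h, he⟩)

lemma slt_asymm {i j : Fin n} (h : slt A i j) : ¬ slt A j i :=
  fun h' => lt_asymm (key_lt_of_slt h) (key_lt_of_slt h')

lemma slt_trans {i j k : Fin n} (h : slt A i j) (h' : slt A j k) : slt A i k := by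
  rcases h with h | ⟨h1, h2⟩ <;> rcases h' with h' | ⟨h1', h2'⟩
  · exact Or.inl (h.trans h')
  · exact Or.inl (h1' ▸ h)
  · exact Or.inl (h1 ▸ h')
  · exact Or.inr ⟨h1.trans h1', h2.trans h2'⟩

lemma subset_of_slt {i j : Fin n} (h : slt A i j) : A i ⊆ A j := by
  rcases h with h | ⟨h1, _⟩
  · exact h.subset
  · exact h1.le

lemma subset_of_sle {i j : Fin n} (h : sle A i j) : A i ⊆ A j := by
  rcases h with rfl | h
  · exact Finset.Subset.refl _
  · exact subset_of_slt h

lemma slt_of_slt_of_sle {i j k : Fin n} (h : slt A i j) (h' : sle A j k) : slt A i k := by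
  rcases h' with rfl | h'
  · exact h
  · exact slt_trans h h'

/-- laminarity hypothesis -/
def Laminar (A : Fin n → Finset X) : Prop :=
  ∀ i j, A i ⊆ A j ∨ A j ⊆ A i ∨ A i ∩ A j = ∅

lemma comparable (hlam : Laminar A) {i j : Fin n} (hij : (A i ∩ A j).Nonempty) :
    slt A i j ∨ i = j ∨ slt A j i := by
  have tri : A i ⊆ A j ∨ A j ⊆ A i := by
    rcases hlam i j with h | h | h
    · exact Or.inl h
    · exact Or.inr h
    · rw [h] at hij; exact absurd hij (by simp)
  rcases tri with h | h
  · rcases ssubset_or_eq h with h | h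
    · exact Or.inl (Or.inl h)
    · rcases lt_trichotomy i j with hl | rfl | hl
      · exact Or.inl (Or.inr ⟨h, hl⟩)
      · exact Or.inr (Or.inl rfl)
      · exact Or.inr (Or.inr (Or.inr ⟨h.symm, hl⟩))
  · rcases ssubset_or_eq h with h | h
    · exact Or.inr (Or.inr (Or.inl h))
    · rcases lt_trichotomy i j with hl | rfl | hl
      · exact Or.inl (Or.inr ⟨h.symm, hl⟩)
      · exact Or.inr (Or.inl rfl)
      · exact Or.inr (Or.inr (Or.inr ⟨h, hl⟩))

/-- the parent of an index: the minimum strictly-above index, if any -/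
noncomputable def par (A : Fin n → Finset X) (i : Fin n) : Option (Fin n) :=
  if h : (Finset.univ.filter (fun j => slt A i j)).Nonempty then
    some (Finset.exists_min_image _ (key A) h).choose
  else none

lemma par_eq_none {i : Fin n} (h : par A i = none) : ∀ j, ¬ slt A i j := by
  intro j hj
  rw [par, dif_pos ⟨j, Finset.mem_filter.mpr ⟨Finset.mem_univ _, hj⟩⟩] at h
  exact Option.some_ne_none _ h

lemma par_slt {i p : Fin n} (h : par A i = some p) : slt A i p := by
  rw [par] at h
  split_ifs at h with hp
  · obtain ⟨hm, _⟩ := (Finset.exists_min_image _ (key A) hp).choose_spec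
    cases Option.some_injective _ h
    exact (Finset.mem_filter.mp hm).2

lemma par_min (hne : ∀ i, (A i).Nonempty) (hlam : Laminar A) {i p : Fin n}
    (h : par A i = some p) : ∀ j, slt A i j → sle A p j := by
  intro j hj
  rw [par] at h
  split_ifs at h with hp
  · obtain ⟨hm, hmin⟩ := (Finset.exists_min_image _ (key A) hp).choose_spec
    cases Option.some_injective _ h
    set p := (Finset.exists_min_image _ (key A) hp).choose
    have hpj : ¬ slt A j p := fun hh =>
      absurd (key_lt_of_slt hh)
        (not_lt.mpr (hmin j (Finset.mem_filter.mpr ⟨Finset.mem_univ _, hj⟩)))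
    have hint : (A p ∩ A j).Nonempty := by
      obtain ⟨x, hx⟩ := hne i
      exact ⟨x, Finset.mem_inter.mpr ⟨subset_of_slt (Finset.mem_filter.mp hm).2 hx,
        subset_of_slt hj hx⟩⟩
    rcases comparable hlam hint with h1 | h1 | h1
    · exact Or.inr h1
    · exact Or.inl h1
    · exact absurd h1 hpj

/-! ### the tree graph on `Option (Fin n)` -/

variable (A) in
/-- the tree graph: each index is joined to its parent (`none` = root). -/
def lamG : SimpleGraph (Option (Fin n)) where
  Adj u v := (∃ i, u = some i ∧ v = par A i) ∨ (∃ i, v = some i ∧ u = par A i)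
  symm := by
    refine ⟨?_⟩
    rintro u v (h | h)
    · exact Or.inr h
    · exact Or.inl h
  loopless := by
    refine ⟨?_⟩
    rintro u (⟨i, rfl, hp⟩ | ⟨i, rfl, hp⟩) <;>
      exact slt_irrefl (par_slt hp.symm)

variable (A) in
noncomputable def eEdge (i : Fin n) : Sym2 (Option (Fin n)) := s(some i, par A i)

lemma eEdge_inj {i j : Fin n} (h : eEdge A i = eEdge A j) : i = j := by
  rw [eEdge, eEdge, Sym2.eq_iff] at h
  rcases h with ⟨h1, h2⟩ | ⟨h1, h2⟩
  · exact Option.some_injective _ h1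
  · exact absurd (par_slt h2) (slt_asymm (par_slt h1.symm))

lemma mem_edgeSet_iff {e : Sym2 (Option (Fin n))} :
    e ∈ (lamG A).edgeSet ↔ ∃ i, e = eEdge A i := by
  induction e with
  | _ u v =>
    rw [SimpleGraph.mem_edgeSet]
    constructor
    · rintro (⟨i, rfl, rfl⟩ | ⟨i, rfl, rfl⟩)
      · exact ⟨i, rfl⟩
      · exact ⟨i, Sym2.eq_swap⟩
    · rintro ⟨i, hi⟩
      rw [eEdge, Sym2.eq_iff] at hi
      rcases hi with ⟨rfl, rfl⟩ | ⟨rfl, rfl⟩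
      · exact Or.inl ⟨i, rfl, rfl⟩
      · exact Or.inr ⟨i, rfl, rfl⟩

/-- "below `i`" predicate on vertices -/
def belowP (A : Fin n → Finset X) (i : Fin n) : Option (Fin n) → Prop :=
  fun u => ∃ j, u = some j ∧ sle A j i

@[simp] lemma belowP_none {i : Fin n} : ¬ belowP A i none := by
  rintro ⟨j, h, -⟩; exact nomatch h

@[simp] lemma belowP_some {i j : Fin n} : belowP A i (some j) ↔ sle A j i := by
  constructor
  · rintro ⟨k, hk, h⟩; cases Option.some_injective _ hk; exact h
  · exact fun h => ⟨j, rfl, h⟩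

/-- measure for induction up the tree -/
noncomputable def mu (A : Fin n → Finset X) (i : Fin n) : ℕ :=
  (Finset.univ.filter (fun j => slt A i j)).card

lemma mu_lt (hne : ∀ i, (A i).Nonempty) (hlam : Laminar A) {i p : Fin n}
    (h : par A i = some p) : mu A p < mu A i := by
  apply Finset.card_lt_card
  constructor
  · intro k hk
    simp only [Finset.mem_filter, Finset.mem_univ, true_and] at hk ⊢
    exact slt_trans (par_slt h) hk
  · intro hsub
    have := hsub (Finset.mem_filter.mpr ⟨Finset.mem_univ p, par_slt h⟩)
    exact slt_irrefl (Finset.mem_filter.mp this).2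

lemma par_ne_none_of_slt {i j : Fin n} (h : slt A i j) : par A i ≠ none :=
  fun hn => par_eq_none hn j h

/-- climbing to the root in the full graph -/
lemma reach_none (hne : ∀ i, (A i).Nonempty) (hlam : Laminar A) (u : Option (Fin n)) :
    (lamG A).Reachable u none := by
  suffices h : ∀ N (j : Fin n), mu A j ≤ N → (lamG A).Reachable (some j) none by
    cases u with
    | none => rfl
    | some j => exact h (mu A j) j le_rfl
  intro N
  induction N with
  | zero =>
    intro j hj
    cases hp : par A j with
    | none => exact (SimpleGraph.Adj.reachable (Or.inl ⟨j, rfl, hp.symm⟩))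
    | some p => exact absurd (mu_lt hne hlam hp) (by omega)
  | succ N ih =>
    intro j hj
    cases hp : par A j with
    | none => exact (SimpleGraph.Adj.reachable (Or.inl ⟨j, rfl, hp.symm⟩))
    | some p =>
      have hadj : (lamG A).Adj (some j) (some p) := Or.inl ⟨j, rfl, hp.symm⟩
      exact hadj.reachable.trans (ih p (by have := mu_lt hne hlam hp; omega))

lemma lamG_connected (hne : ∀ i, (A i).Nonempty) (hlam : Laminar A) :
    (lamG A).Connected := by
  rw [SimpleGraph.connected_iff]
  exact ⟨fun u v => (reach_none hne hlam u).trans (reach_none hne hlam v).symm, ⟨none⟩⟩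

/-! ### reachability after deleting the edge of index `i` -/

variable (A) in
noncomputable def lamH (i : Fin n) : SimpleGraph (Option (Fin n)) :=
  (lamG A).deleteEdges {eEdge A i}

lemma sle_par_of_slt (hne : ∀ i, (A i).Nonempty) (hlam : Laminar A) {i j p : Fin n}
    (hj : slt A j i) (hp : par A j = some p) : sle A p i :=
  par_min hne hlam hp i hj

lemma par_eq_some_of_slt {i j : Fin n} (hj : slt A j i) : ∃ p, par A j = some p := by
  cases hp : par A j with
  | none => exact absurd hj (par_eq_none hp i)
  | some p => exact ⟨p, rfl⟩

lemma adj_below_iff (hne : ∀ i, (A i).Nonempty) (hlam : Laminar A) {i : Fin n}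
    {u v : Option (Fin n)} (h : (lamH A i).Adj u v) : (belowP A i u ↔ belowP A i v) := by
  rw [lamH, SimpleGraph.deleteEdges_adj] at h
  obtain ⟨hadj, hne'⟩ := h
  have key : ∀ (j : Fin n) (w : Option (Fin n)), j ≠ i → w = par A j →
      (belowP A i (some j) ↔ belowP A i w) := by
    intro j w hji hw
    constructor
    · intro hb
      have hj : slt A j i := by
        rcases belowP_some.mp hb with rfl | h'
        · exact absurd rfl hji
        · exact h'
      obtain ⟨p, hp⟩ := par_eq_some_of_slt hj
      rw [hw, hp]
      exact belowP_some.mpr (sle_par_of_slt hne hlam hj hp)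
    · intro hb
      cases hwp : par A j with
      | none => rw [hw, hwp] at hb; exact absurd hb belowP_none
      | some p =>
        rw [hw, hwp] at hb
        have hpi : sle A p i := belowP_some.mp hb
        exact belowP_some.mpr (Or.inr (slt_of_slt_of_sle (par_slt hwp) hpi))
  rcases hadj with ⟨j, rfl, hw⟩ | ⟨j, rfl, hw⟩
  · have hji : j ≠ i := by
      rintro rfl; exact hne' (by rw [hw]; rfl)
    exact key j v hji hw
  · have hji : j ≠ i := by
      rintro rfl; exact hne' (by rw [hw, eEdge]; exact Sym2.eq_swap)
    exact (key j u hji hw).symm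

lemma reach_below_invariant (hne : ∀ i, (A i).Nonempty) (hlam : Laminar A) {i : Fin n}
    {u v : Option (Fin n)} (h : (lamH A i).Reachable u v) :
    (belowP A i u ↔ belowP A i v) := by
  obtain ⟨w⟩ := h
  induction w with
  | nil => rfl
  | cons hadj _ ih => exact (adj_below_iff hne hlam hadj).trans ih

lemma edge_mem_lamH {i j : Fin n} (hji : j ≠ i) :
    (lamH A i).Adj (some j) (par A j) := by
  rw [lamH, SimpleGraph.deleteEdges_adj]
  refine ⟨Or.inl ⟨j, rfl, rfl⟩, ?_⟩
  intro hmem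
  exact hji (eEdge_inj (Set.mem_singleton_iff.mp hmem))

lemma reach_below (hne : ∀ i, (A i).Nonempty) (hlam : Laminar A) {i j : Fin n}
    (hj : sle A j i) : (lamH A i).Reachable (some j) (some i) := by
  suffices h : ∀ N (j : Fin n), mu A j ≤ N → sle A j i →
      (lamH A i).Reachable (some j) (some i) by
    exact h (mu A j) j le_rfl hj
  intro N
  induction N with
  | zero =>
    intro j hmu hj
    rcases hj with rfl | hj
    · rfl
    · obtain ⟨p, hp⟩ := par_eq_some_of_slt hj
      exact absurd (mu_lt hne hlam hp) (by omega)
  | succ N ih =>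
    intro j hmu hj
    rcases hj with rfl | hj
    · rfl
    · obtain ⟨p, hp⟩ := par_eq_some_of_slt hj
      have hadj := edge_mem_lamH (A := A) (i := i) (j := j) (by rintro rfl; exact slt_irrefl hj)
      rw [hp] at hadj
      exact hadj.reachable.trans
        (ih p (by have := mu_lt hne hlam hp; omega) (sle_par_of_slt hne hlam hj hp))

lemma reach_above (hne : ∀ i, (A i).Nonempty) (hlam : Laminar A) {i : Fin n}
    {u : Option (Fin n)} (hu : ¬ belowP A i u) : (lamH A i).Reachable u none := by
  suffices h : ∀ N (j : Fin n), mu A j ≤ N → ¬ sle A j i →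
      (lamH A i).Reachable (some j) none by
    cases u with
    | none => rfl
    | some j => exact h (mu A j) j le_rfl (fun hb => hu (belowP_some.mpr hb))
  intro N
  induction N with
  | zero =>
    intro j hmu hj
    cases hp : par A j with
    | none =>
      have hadj := edge_mem_lamH (A := A) (i := i) (j := j) (fun h => hj (h ▸ Or.inl rfl))
      rw [hp] at hadj
      exact hadj.reachable
    | some p => exact absurd (mu_lt hne hlam hp) (by omega)
  | succ N ih =>
    intro j hmu hj
    have hji : j ≠ i := fun h => hj (h ▸ Or.inl rfl)
    cases hp : par A j with
    | none =>
      have hadj := edge_mem_lamH (A := A) (i := i) (j := j) hji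
      rw [hp] at hadj
      exact hadj.reachable
    | some p =>
      have hadj := edge_mem_lamH (A := A) (i := i) (j := j) hji
      rw [hp] at hadj
      have hpi : ¬ sle A p i := by
        intro hpi
        exact hj (Or.inr (slt_of_slt_of_sle (par_slt hp) hpi))
      exact hadj.reachable.trans (ih p (by have := mu_lt hne hlam hp; omega) hpi)

lemma reach_iff (hne : ∀ i, (A i).Nonempty) (hlam : Laminar A) {i : Fin n}
    {u v : Option (Fin n)} :
    (lamH A i).Reachable u v ↔ (belowP A i u ↔ belowP A i v) := by
  constructor
  · exact reach_below_invariant hne hlam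
  · intro hiff
    by_cases hu : belowP A i u
    · have hv : belowP A i v := hiff.mp hu
      obtain ⟨j, rfl, hj⟩ := hu
      obtain ⟨k, rfl, hk⟩ := hv
      exact (reach_below hne hlam hj).trans (reach_below hne hlam hk).symm
    · have hv : ¬ belowP A i v := fun h => hu (hiff.mpr h)
      exact (reach_above hne hlam hu).trans (reach_above hne hlam hv).symm

lemma not_reach_ends (hne : ∀ i, (A i).Nonempty) (hlam : Laminar A) (i : Fin n) :
    ¬ (lamH A i).Reachable (some i) (par A i) := by
  intro h
  have := (reach_iff hne hlam).mp h
  have hb : belowP A i (some i) := belowP_some.mpr (Or.inl rfl)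
  have : belowP A i (par A i) := this.mp hb
  cases hp : par A i with
  | none => rw [hp] at this; exact belowP_none this
  | some p =>
    rw [hp] at this
    rcases belowP_some.mp this with rfl | h'
    · exact slt_irrefl (par_slt hp)
    · exact slt_asymm (par_slt hp) h'

lemma lamG_isTree (hne : ∀ i, (A i).Nonempty) (hlam : Laminar A) :
    (lamG A).IsTree := by
  constructor
  · exact lamG_connected hne hlam
  · rw [SimpleGraph.isAcyclic_iff_forall_adj_isBridge]
    intro u v hadj
    rw [SimpleGraph.isBridge_iff]
    rcases hadj with ⟨j, rfl, rfl⟩ | ⟨j, rfl, rfl⟩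
    · exact fun h => not_reach_ends hne hlam j h
    · rw [show s(par A j, some j) = s(some j, par A j) from Sym2.eq_swap]
      exact fun h => not_reach_ends hne hlam j h.symm

/-! ### labelling -/

variable (A) in
noncomputable def labv (x : X) : Option (Fin n) :=
  if h : (Finset.univ.filter (fun j => x ∈ A j)).Nonempty then
    some (Finset.exists_min_image _ (key A) h).choose
  else none

lemma labv_eq_none {x : X} (h : labv A x = none) : ∀ j, x ∉ A j := by
  intro j hj
  rw [labv, dif_pos ⟨j, Finset.mem_filter.mpr ⟨Finset.mem_univ _, hj⟩⟩] at h
  exact Option.some_ne_none _ h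

lemma labv_mem {x : X} {m : Fin n} (h : labv A x = some m) : x ∈ A m := by
  rw [labv] at h
  split_ifs at h with hp
  obtain ⟨hm, _⟩ := (Finset.exists_min_image _ (key A) hp).choose_spec
  cases Option.some_injective _ h
  exact (Finset.mem_filter.mp hm).2

lemma labv_min (hlam : Laminar A) {x : X} {m : Fin n} (h : labv A x = some m) :
    ∀ j, x ∈ A j → sle A m j := by
  intro j hj
  rw [labv] at h
  split_ifs at h with hp
  obtain ⟨hm, hmin⟩ := (Finset.exists_min_image _ (key A) hp).choose_spec
  cases Option.some_injective _ h
  set m := (Finset.exists_min_image _ (key A) hp).choose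
  have hmj : ¬ slt A j m := fun hh =>
    absurd (key_lt_of_slt hh)
      (not_lt.mpr (hmin j (Finset.mem_filter.mpr ⟨Finset.mem_univ _, hj⟩)))
  have hint : (A m ∩ A j).Nonempty :=
    ⟨x, Finset.mem_inter.mpr ⟨(Finset.mem_filter.mp hm).2, hj⟩⟩
  rcases comparable hlam hint with h1 | h1 | h1
  · exact Or.inr h1
  · exact Or.inl h1
  · exact absurd h1 hmj

lemma labv_some_of_mem {x : X} {i : Fin n} (hx : x ∈ A i) : ∃ m, labv A x = some m := by
  cases h : labv A x with
  | none => exact absurd hx (labv_eq_none h i)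
  | some m => exact ⟨m, rfl⟩

lemma below_labv_iff (hlam : Laminar A) {x : X} {i : Fin n} :
    belowP A i (labv A x) ↔ x ∈ A i := by
  constructor
  · intro hb
    obtain ⟨m, hm, hmi⟩ := hb
    exact subset_of_sle hmi (labv_mem hm)
  · intro hx
    obtain ⟨m, hm⟩ := labv_some_of_mem hx
    rw [hm]
    exact belowP_some.mpr (labv_min hlam hm i hx)

/-- existence of a child of `i` when something is strictly below `i` -/
lemma exists_child (hne : ∀ i, (A i).Nonempty) (hlam : Laminar A) {i j : Fin n}
    (hj : slt A j i) : ∃ k, par A k = some i := by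
  suffices h : ∀ N (j : Fin n), mu A j ≤ N → slt A j i → ∃ k, par A k = some i by
    exact h (mu A j) j le_rfl hj
  intro N
  induction N with
  | zero =>
    intro j hmu hj
    obtain ⟨p, hp⟩ := par_eq_some_of_slt hj
    exact absurd (mu_lt hne hlam hp) (by omega)
  | succ N ih =>
    intro j hmu hj
    obtain ⟨p, hp⟩ := par_eq_some_of_slt hj
    rcases sle_par_of_slt hne hlam hj hp with rfl | hpi
    · exact ⟨j, hp⟩
    · exact ih p (by have := mu_lt hne hlam hp; omega) hpi

lemma leaf_labelled (hne : ∀ i, (A i).Nonempty) (hlam : Laminar A)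
    (hfree : ∃ r : X, ∀ i, r ∉ A i) (v : Option (Fin n))
    (hv : ∃! w, (lamG A).Adj v w) : v ∈ Set.range (labv A) := by
  cases v with
  | none =>
    obtain ⟨r, hr⟩ := hfree
    refine ⟨r, ?_⟩
    rw [labv, dif_neg]
    rintro ⟨j, hj⟩
    exact hr j (Finset.mem_filter.mp hj).2
  | some i =>
    by_contra hnr
    obtain ⟨x, hx⟩ := hne i
    obtain ⟨m, hm⟩ := labv_some_of_mem hx
    have hmi : sle A m i := labv_min hlam hm i hx
    have hmne : m ≠ i := by
      rintro rfl
      exact hnr ⟨x, hm⟩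
    have hslt : slt A m i := by
      rcases hmi with rfl | h
      · exact absurd rfl hmne
      · exact h
    obtain ⟨k, hk⟩ := exists_child hne hlam hslt
    have hadj1 : (lamG A).Adj (some i) (some k) := Or.inr ⟨k, rfl, hk.symm⟩
    have hadj2 : (lamG A).Adj (some i) (par A i) := Or.inl ⟨i, rfl, rfl⟩
    have heq : some k = par A i := (hv.unique hadj1 hadj2)
    cases hp : par A i with
    | none => rw [hp] at heq; exact nomatch heq
    | some p =>
      rw [hp] at heq
      cases Option.some_injective _ heq
      exact slt_asymm (par_slt hp) (par_slt hk)

variable (A) in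
/-- the bundled weak X-tree obtained from a laminar family -/
noncomputable def lamTree (hne : ∀ i, (A i).Nonempty) (hlam : Laminar A)
    (hfree : ∃ r : X, ∀ i, r ∉ A i) : WeakXTree X where
  V := Option (Fin n)
  G := lamG A
  isTree := lamG_isTree hne hlam
  lab := labv A
  leaf_labelled := leaf_labelled hne hlam hfree

lemma lamTree_splitOf (hne : ∀ i, (A i).Nonempty) (hlam : Laminar A)
    (hfree : ∃ r : X, ∀ i, r ∉ A i) (i : Fin n) :
    (lamTree A hne hlam hfree).splitOf (eEdge A i) = {A i, (A i)ᶜ} := by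
  have hfun : ∀ u : Option (Fin n),
      (Finset.univ.filter (fun x : X =>
        ((lamG A).deleteEdges {eEdge A i}).Reachable u (labv A x)))
      = if belowP A i u then A i else (A i)ᶜ := by
    intro u
    ext x
    rw [Finset.mem_filter]
    have : ((lamG A).deleteEdges {eEdge A i}).Reachable u (labv A x) ↔
        (belowP A i u ↔ x ∈ A i) := by
      rw [show (lamG A).deleteEdges {eEdge A i} = lamH A i from rfl,
        reach_iff hne hlam, below_labv_iff hlam]
    rw [this]
    by_cases hu : belowP A i u
    · simp [hu]
    · simp [hu, Finset.mem_compl]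
  unfold WeakXTree.splitOf
  show Finset.image (fun u : Option (Fin n) =>
      Finset.univ.filter (fun x : X =>
        ((lamG A).deleteEdges {eEdge A i}).Reachable u (labv A x))) Finset.univ = _
  ext σ
  rw [Finset.mem_image]
  constructor
  · rintro ⟨u, -, rfl⟩
    rw [hfun u]
    by_cases hu : belowP A i u
    · rw [if_pos hu]; exact Finset.mem_insert_self _ _
    · rw [if_neg hu]; exact Finset.mem_insert.mpr (Or.inr (Finset.mem_singleton_self _))
  · intro hσ
    rcases Finset.mem_insert.mp hσ with rfl | hσ
    · refine ⟨some i, Finset.mem_univ _, ?_⟩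
      rw [hfun (some i), if_pos (belowP_some.mpr (Or.inl rfl))]
    · rw [Finset.mem_singleton] at hσ
      subst hσ
      refine ⟨none, Finset.mem_univ _, ?_⟩
      rw [hfun none, if_neg belowP_none]

lemma lamTree_splits (hne : ∀ i, (A i).Nonempty) (hlam : Laminar A)
    (hfree : ∃ r : X, ∀ i, r ∉ A i) :
    (lamTree A hne hlam hfree).splits =
      Multiset.map (fun i => ({A i, (A i)ᶜ} : Finset (Finset X)))
        (Finset.univ : Finset (Fin n)).val := by
  have hedge : (lamG A).edgeFinset = Finset.image (eEdge A) Finset.univ := by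
    ext e
    rw [SimpleGraph.mem_edgeFinset, mem_edgeSet_iff, Finset.mem_image]
    constructor
    · rintro ⟨i, rfl⟩; exact ⟨i, Finset.mem_univ _, rfl⟩
    · rintro ⟨i, -, rfl⟩; exact ⟨i, rfl⟩
  have hval : (lamG A).edgeFinset.val =
      Multiset.map (eEdge A) (Finset.univ : Finset (Fin n)).val := by
    rw [hedge]
    exact Finset.image_val_of_injOn (fun a _ b _ h => eEdge_inj h)
  rw [WeakXTree.splits]
  show ((lamG A).edgeFinset.val).map _ = _
  rw [hval]
  refine (Multiset.map_map _ _ _).trans ?_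
  apply Multiset.map_congr rfl
  intro i _
  exact lamTree_splitOf hne hlam hfree i

end SplitsEq



section TopLevel
variable {X : Type} [Fintype X] [DecidableEq X]

lemma isSplit_pair_disjoint {σ : Finset (Finset X)} (h : IsSplit σ) :
    ∃ P ∈ σ, ∃ Q ∈ σ, P ∩ Q = ∅ := by
  obtain ⟨a, b, hab, rfl⟩ := Finset.card_eq_two.mp h.2
  refine ⟨a, Finset.mem_insert_self _ _, b,
    Finset.mem_insert.mpr (Or.inr (Finset.mem_singleton_self _)), ?_⟩
  ext x
  simp only [Finset.mem_inter, Finset.notMem_empty, iff_false]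
  rintro ⟨hxa, hxb⟩
  obtain ⟨P, -, hP⟩ := h.1.2 x
  exact hab ((hP a ⟨Finset.mem_insert_self _ _, hxa⟩).trans
    (hP b ⟨Finset.mem_insert.mpr (Or.inr (Finset.mem_singleton_self _)), hxb⟩).symm)

lemma isSplit_orient (r : X) {σ : Finset (Finset X)} (h : IsSplit σ) :
    ∃ B : Finset X, σ = {B, Bᶜ} ∧ r ∉ B ∧ B.Nonempty := by
  obtain ⟨a, b, hab, rfl⟩ := Finset.card_eq_two.mp h.2
  have hamem : a ∈ ({a, b} : Finset (Finset X)) := Finset.mem_insert_self _ _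
  have hbmem : b ∈ ({a, b} : Finset (Finset X)) :=
    Finset.mem_insert.mpr (Or.inr (Finset.mem_singleton_self _))
  have hdisj : ∀ x : X, x ∈ a → x ∈ b → False := by
    intro x hxa hxb
    obtain ⟨P, -, hP⟩ := h.1.2 x
    exact hab ((hP a ⟨hamem, hxa⟩).trans (hP b ⟨hbmem, hxb⟩).symm)
  have hcover : ∀ x : X, x ∈ a ∨ x ∈ b := by
    intro x
    obtain ⟨P, ⟨hPmem, hxP⟩, -⟩ := h.1.2 x
    rcases Finset.mem_insert.mp hPmem with rfl | hPmem
    · exact Or.inl hxP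
    · rw [Finset.mem_singleton] at hPmem; subst hPmem; exact Or.inr hxP
  obtain ⟨P, ⟨hPmem, hrP⟩, -⟩ := h.1.2 r
  have hcompl : b = aᶜ := by
    ext x
    rw [Finset.mem_compl]
    constructor
    · intro hxb hxa; exact hdisj x hxa hxb
    · intro hxa; rcases hcover x with h' | h'
      · exact absurd h' hxa
      · exact h'
  rcases Finset.mem_insert.mp hPmem with rfl | hPmem
  · refine ⟨b, ?_, ?_, h.1.1 b hbmem⟩
    · rw [hcompl, compl_compl, Finset.pair_comm]
    · rw [hcompl, Finset.mem_compl]; simp [hrP]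
  · rw [Finset.mem_singleton] at hPmem; subst hPmem
    refine ⟨a, by rw [hcompl], ?_, h.1.1 a hamem⟩
    intro hra; exact hdisj r hra hrP

/-- key geometric lemma: disjointness of appropriate sides of two distinct tree edges -/
lemma tree_core (T : WeakXTree X) {u v a b v' b' : T.V}
    (huv : T.G.Adj u v) (hab : T.G.Adj a b) (hE : s(u, v) ≠ s(a, b))
    (hb' : b' = a ∨ b' = b)
    (h1 : ¬ (T.G.deleteEdges {s(u, v)}).Reachable a v')
    (h2 : ¬ (T.G.deleteEdges {s(a, b)}).Reachable u b') :
    (Finset.univ.filter (fun x : X =>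
        (T.G.deleteEdges {s(u, v)}).Reachable v' (T.lab x))) ∩
      (Finset.univ.filter (fun x : X =>
        (T.G.deleteEdges {s(a, b)}).Reachable b' (T.lab x))) = ∅ := by
  set D1 := T.G.deleteEdges {s(u, v)} with hD1
  set D2 := T.G.deleteEdges {s(a, b)} with hD2
  ext x
  simp only [Finset.mem_inter, Finset.mem_filter, Finset.mem_univ, true_and,
    Finset.notMem_empty, iff_false]
  rintro ⟨hx1, hx2⟩
  obtain ⟨p2⟩ := hx2
  have hedge : s(u, v) ∉ p2.edges := by
    intro hmem
    have hu : u ∈ p2.support := p2.fst_mem_support_of_mem_edges hmem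
    have : D2.Reachable b' u := ⟨p2.takeUntil u hu⟩
    exact h2 this.symm
  have hq2 : ∀ e ∈ p2.edges, e ∈ D1.edgeSet := by
    intro e he
    rw [hD1, SimpleGraph.edgeSet_deleteEdges]
    have heG : e ∈ D2.edgeSet := p2.edges_subset_edgeSet he
    rw [hD2, SimpleGraph.edgeSet_deleteEdges] at heG
    exact ⟨heG.1, fun hh => hedge (by rwa [Set.mem_singleton_iff.mp hh] at he)⟩
  have hb2x : D1.Reachable b' (T.lab x) := ⟨p2.transfer D1 hq2⟩
  have hRvb : D1.Reachable v' b' := hx1.trans hb2x.symm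
  have hD1ab : D1.Adj a b := by
    rw [hD1, SimpleGraph.deleteEdges_adj]
    exact ⟨hab, fun hh => hE (Set.mem_singleton_iff.mp hh).symm⟩
  have hab' : D1.Reachable a b' := by
    rcases hb' with rfl | rfl
    · rfl
    · exact hD1ab.reachable
  exact h1 (hab'.trans hRvb.symm)

lemma tree_splits_compatible (T : WeakXTree X) {e1 e2 : Sym2 T.V}
    (h1 : e1 ∈ T.G.edgeSet) (h2 : e2 ∈ T.G.edgeSet) (hne : e1 ≠ e2) :
    SplitsCompatible (T.splitOf e1) (T.splitOf e2) := by
  induction e1 using Sym2.ind with | _ u v =>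
  induction e2 using Sym2.ind with | _ a b =>
  rw [SimpleGraph.mem_edgeSet] at h1 h2
  have hbridge : ∀ {p q : T.V}, T.G.Adj p q →
      ¬ (T.G.deleteEdges {s(p, q)}).Reachable p q := by
    intro p q hpq
    have := (SimpleGraph.isAcyclic_iff_forall_adj_isBridge.mp T.isTree.2) hpq
    exact SimpleGraph.isBridge_iff.mp this
  set D1 := T.G.deleteEdges {s(u, v)} with hD1
  set D2 := T.G.deleteEdges {s(a, b)} with hD2
  have hD2uv : D2.Adj u v := by
    rw [hD2, SimpleGraph.deleteEdges_adj]
    exact ⟨h1, fun hh => hne (Set.mem_singleton_iff.mp hh)⟩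
  have hD1ab : D1.Adj a b := by
    rw [hD1, SimpleGraph.deleteEdges_adj]
    exact ⟨h2, fun hh => hne (Set.mem_singleton_iff.mp hh).symm⟩
  -- choose b' : endpoint of e2 not D2-reachable from u
  obtain ⟨b', hb', hnub⟩ : ∃ b', (b' = a ∨ b' = b) ∧ ¬ D2.Reachable u b' := by
    by_cases hc : D2.Reachable u b
    · refine ⟨a, Or.inl rfl, fun hr => ?_⟩
      exact hbridge h2 (hr.symm.trans hc)
    · exact ⟨b, Or.inr rfl, hc⟩
  -- choose v' : endpoint of e1 not D1-reachable from a
  obtain ⟨v', hv', hnav⟩ : ∃ v', (v' = u ∨ v' = v) ∧ ¬ D1.Reachable a v' := by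
    by_cases hc : D1.Reachable a v
    · refine ⟨u, Or.inl rfl, fun hr => ?_⟩
      exact hbridge h1 (hr.symm.trans hc)
    · exact ⟨v, Or.inr rfl, hc⟩
  refine ⟨Finset.univ.filter (fun x : X => D1.Reachable v' (T.lab x)), ?_,
    Finset.univ.filter (fun x : X => D2.Reachable b' (T.lab x)), ?_, ?_⟩
  · exact Finset.mem_image_of_mem _ (Finset.mem_univ v')
  · exact Finset.mem_image_of_mem _ (Finset.mem_univ b')
  · exact tree_core T h1 h2 hne hb' hnav hnub

end TopLevel

/-- Splits-Equivalence, existence part: a split system on `X`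
(`|X| ≥ 2`) is displayed by some weak X-tree iff it is compatible. -/
theorem stmt_0 {X : Type} [Fintype X] [DecidableEq X] (hX : 2 ≤ Fintype.card X)
    (S : Multiset (Finset (Finset X))) (hS : IsSplitSystem S) :
    (∃ T : WeakXTree X, T.splits = S) ↔ CompatibleSystem S := by
  constructor
  · -- forward: a tree's splits are compatible
    rintro ⟨T, rfl⟩ σ1 h1 σ2 h2
    obtain ⟨e1, he1, rfl⟩ := Multiset.mem_map.mp h1
    obtain ⟨e2, he2, rfl⟩ := Multiset.mem_map.mp h2
    by_cases he : e1 = e2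
    · subst he
      obtain ⟨P, hP, Q, hQ, hPQ⟩ := isSplit_pair_disjoint (hS _ h1)
      exact ⟨P, hP, Q, hQ, hPQ⟩
    · exact tree_splits_compatible T
        (SimpleGraph.mem_edgeFinset.mp he1)
        (SimpleGraph.mem_edgeFinset.mp he2) he
  · -- backward: realize a compatible split system by a tree
    intro hC
    have hXne : Nonempty X := Fintype.card_pos_iff.mp (by omega)
    obtain ⟨r⟩ := hXne
    set l := S.toList with hl
    have hmem : ∀ i : Fin l.length, l.get i ∈ S := by
      intro i
      rw [← Multiset.coe_toList S]
      exact Multiset.mem_coe.mpr (l.get_mem i)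
    have hsplit : ∀ i : Fin l.length, IsSplit (l.get i) := fun i => hS _ (hmem i)
    choose A hA hrA hAne using fun i : Fin l.length => isSplit_orient r (hsplit i)
    have hAS : ∀ i : Fin l.length, ({A i, (A i)ᶜ} : Finset (Finset X)) ∈ S := by
      intro i; rw [← hA i]; exact hmem i
    have hlam : SplitsEq.Laminar A := by
      intro i j
      obtain ⟨P, hP, Q, hQ, hPQ⟩ := hC _ (hAS i) _ (hAS j)
      rcases Finset.mem_insert.mp hP with rfl | hP
      · rcases Finset.mem_insert.mp hQ with rfl | hQ
        · exact Or.inr (Or.inr hPQ)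
        · rw [Finset.mem_singleton] at hQ; subst hQ
          refine Or.inl (fun x hx => ?_)
          by_contra hxj
          have : x ∈ A i ∩ (A j)ᶜ := Finset.mem_inter.mpr ⟨hx, Finset.mem_compl.mpr hxj⟩
          rw [hPQ] at this
          exact Finset.notMem_empty x this
      · rw [Finset.mem_singleton] at hP; subst hP
        rcases Finset.mem_insert.mp hQ with rfl | hQ
        · refine Or.inr (Or.inl (fun x hx => ?_))
          by_contra hxi
          have : x ∈ (A i)ᶜ ∩ A j := Finset.mem_inter.mpr ⟨Finset.mem_compl.mpr hxi, hx⟩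
          rw [hPQ] at this
          exact Finset.notMem_empty x this
        · rw [Finset.mem_singleton] at hQ; subst hQ
          exfalso
          have : r ∈ (A i)ᶜ ∩ (A j)ᶜ :=
            Finset.mem_inter.mpr ⟨Finset.mem_compl.mpr (hrA i), Finset.mem_compl.mpr (hrA j)⟩
          rw [hPQ] at this
          exact Finset.notMem_empty r this
    have hfree : ∃ r' : X, ∀ i, r' ∉ A i := ⟨r, hrA⟩
    refine ⟨SplitsEq.lamTree A hAne hlam hfree, ?_⟩
    rw [SplitsEq.lamTree_splits]
    have : Multiset.map (fun i => ({A i, (A i)ᶜ} : Finset (Finset X)))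
        (Finset.univ : Finset (Fin l.length)).val
        = Multiset.map (fun i => l.get i) (Finset.univ : Finset (Fin l.length)).val := by
      apply Multiset.map_congr rfl
      intro i _
      exact (hA i).symm
    rw [this, Fin.univ_def]
    show ((List.finRange l.length : Multiset (Fin l.length)).map l.get) = S
    rw [Multiset.map_coe, List.map_get_finRange]
    exact Multiset.coe_toList S
end

section
/- Let T = (T;φ) and T' = (T';φ') be weak X-trees on a finite set X with |X| ≥ 2 such that Σ(T) = Σ(T') as multisets. Then T and T' are isomorphic, i.e., there exists a bijection ψ : V(T) → V(T') inducing a graph isomorphism between T and T' such that φ'(x) = ψ(φ(x)) for all x ∈ X. -/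
open scoped Classical

variable {X : Type} [Fintype X] [DecidableEq X]

/-- Two weak X-trees are isomorphic if there is a bijection of their vertex sets
inducing a graph isomorphism and commuting with the labelling maps. -/
def WeakXTree.Isomorphic (T T' : WeakXTree X) : Prop :=
  ∃ ψ : T.V ≃ T'.V, (∀ u v : T.V, T.G.Adj u v ↔ T'.G.Adj (ψ u) (ψ v)) ∧
    ∀ x : X, T'.lab x = ψ (T.lab x)

namespace SplitsEquiv

open SimpleGraph

noncomputable def sideL (T : WeakXTree X) (v : T.V) (e : Sym2 T.V) : Finset X :=
  Finset.univ.filter (fun x : X => (T.G.deleteEdges {e}).Reachable v (T.lab x))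

noncomputable def mm (T : WeakXTree X) (v : T.V) : Multiset (Finset X) :=
  T.G.edgeFinset.val.map (fun e => sideL T v e)

variable {T : WeakXTree X}

lemma mem_sideL {v : T.V} {e : Sym2 T.V} {x : X} :
    x ∈ sideL T v e ↔ (T.G.deleteEdges {e}).Reachable v (T.lab x) := by
  simp [sideL]

lemma splitOf_eq_image (e : Sym2 T.V) :
    T.splitOf e = Finset.image (fun u => sideL T u e) Finset.univ := rfl

lemma sideL_mem_splitOf (u : T.V) (e : Sym2 T.V) : sideL T u e ∈ T.splitOf e := by
  rw [splitOf_eq_image]; exact Finset.mem_image_of_mem _ (Finset.mem_univ u)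

lemma reachable_walk (u v : T.V) : ∃ p : T.G.Walk u v, p.IsPath := by
  obtain ⟨p⟩ := T.isTree.isConnected.preconnected u v
  exact ⟨p.toPath, p.toPath.2⟩

lemma path_unique' {u v : T.V} {p q : T.G.Walk u v} (hp : p.IsPath) (hq : q.IsPath) : p = q := by
  have := T.isTree.IsAcyclic.path_unique ⟨p, hp⟩ ⟨q, hq⟩
  exact congrArg Subtype.val this

lemma reach_endpoint_aux {w z : T.V} (p : T.G.Walk w z) {a b : T.V} (h : T.G.Adj a b) :
    (T.G.deleteEdges {s(a,b)}).Reachable w z ∨ (T.G.deleteEdges {s(a,b)}).Reachable w a ∨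
      (T.G.deleteEdges {s(a,b)}).Reachable w b := by
  induction p with
  | nil => exact Or.inl (Reachable.refl _)
  | @cons u c z h' p ih =>
    by_cases he : s(u, c) = s(a, b)
    · rcases Sym2.eq_iff.mp he with ⟨rfl, rfl⟩ | ⟨rfl, rfl⟩
      · exact Or.inr (Or.inl (Reachable.refl _))
      · exact Or.inr (Or.inr (Reachable.refl _))
    · have hadj : (T.G.deleteEdges {s(a,b)}).Adj u c := by
        rw [SimpleGraph.deleteEdges_adj]
        exact ⟨h', by simpa using he⟩
      rcases ih with h1 | h1 | h1
      · exact Or.inl (hadj.reachable.trans h1)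
      · exact Or.inr (Or.inl (hadj.reachable.trans h1))
      · exact Or.inr (Or.inr (hadj.reachable.trans h1))

lemma reach_endpoint {a b : T.V} (h : T.G.Adj a b) (w : T.V) :
    (T.G.deleteEdges {s(a,b)}).Reachable w a ∨ (T.G.deleteEdges {s(a,b)}).Reachable w b := by
  obtain ⟨p, _⟩ := reachable_walk (T := T) w a
  rcases reach_endpoint_aux p h with h1 | h1 | h1
  · exact Or.inl h1
  · exact Or.inl h1
  · exact Or.inr h1

lemma not_reach_across {a b : T.V} (h : T.G.Adj a b) :
    ¬ (T.G.deleteEdges {s(a,b)}).Reachable a b := by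
  have hb := SimpleGraph.isAcyclic_iff_forall_adj_isBridge.mp T.isTree.IsAcyclic h
  exact SimpleGraph.isBridge_iff.mp hb

lemma sideL_eq_of_reach {u w : T.V} {e : Sym2 T.V}
    (h : (T.G.deleteEdges {e}).Reachable u w) : sideL T u e = sideL T w e := by
  ext x
  simp only [mem_sideL]
  exact ⟨fun h' => h.symm.trans h', fun h' => h.trans h'⟩

lemma sideL_compl {a b : T.V} (h : T.G.Adj a b) :
    sideL T b s(a,b) = (sideL T a s(a,b))ᶜ := by
  ext x
  simp only [Finset.mem_compl, mem_sideL]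
  constructor
  · intro hb ha
    exact not_reach_across h (ha.trans hb.symm)
  · intro ha
    rcases reach_endpoint h (T.lab x) with h1 | h1
    · exact absurd h1.symm ha
    · exact h1.symm

lemma sideL_two {a b : T.V} (h : T.G.Adj a b) (w : T.V) :
    sideL T w s(a,b) = sideL T a s(a,b) ∨ sideL T w s(a,b) = sideL T b s(a,b) := by
  rcases reach_endpoint h w with h1 | h1
  · exact Or.inl (sideL_eq_of_reach h1)
  · exact Or.inr (sideL_eq_of_reach h1)

lemma sideL_adj_other {u v : T.V} (h : T.G.Adj u v) {f : Sym2 T.V} (hf : f ≠ s(u,v)) :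
    sideL T u f = sideL T v f := by
  apply sideL_eq_of_reach
  exact SimpleGraph.Adj.reachable (by rw [SimpleGraph.deleteEdges_adj]; exact ⟨h, by simpa using hf.symm⟩)

lemma reach_delete_of_not_support {d : Sym2 T.V} {a b : T.V} :
    ∀ {u z : T.V} (p : (T.G.deleteEdges {d}).Walk u z), a ∉ p.support →
      (T.G.deleteEdges {s(a,b)}).Reachable u z := by
  intro u z p
  induction p with
  | nil => exact fun _ => Reachable.refl _
  | @cons u c z h' q ih =>
    intro ha
    rw [SimpleGraph.Walk.support_cons, List.mem_cons] at ha
    push_neg at ha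
    have hG : T.G.Adj u c := (SimpleGraph.deleteEdges_adj.mp h').1
    have hne : s(u,c) ≠ s(a,b) := by
      intro he
      rcases Sym2.eq_iff.mp he with ⟨rfl, rfl⟩ | ⟨hub, hca⟩
      · exact ha.1 rfl
      · exact ha.2 (by rw [← hca]; exact q.start_mem_support)
    have hadj : (T.G.deleteEdges {s(a,b)}).Adj u c := by
      rw [SimpleGraph.deleteEdges_adj]; exact ⟨hG, by simpa using hne⟩
    exact hadj.reachable.trans (ih ha.2)

lemma sideL_nonempty_aux :
    ∀ (n : ℕ) {a b : T.V}, T.G.Adj a b →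
      (Finset.univ.filter
        (fun z => (T.G.deleteEdges {s(a,b)}).Reachable a z)).card ≤ n →
      ∃ x : X, x ∈ sideL T a s(a,b) := by
  intro n
  induction n with
  | zero =>
    intro a b h hc
    exfalso
    have : a ∈ Finset.univ.filter
        (fun z => (T.G.deleteEdges {s(a,b)}).Reachable a z) := by
      simp [Reachable.refl]
    have := Finset.card_pos.mpr ⟨a, this⟩
    omega
  | succ n ih =>
    intro a b h hc
    by_cases hlab : a ∈ Set.range T.lab
    · obtain ⟨x, hx⟩ := hlab
      exact ⟨x, mem_sideL.mpr (by rw [hx])⟩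
    · have hnl : ¬ ∃! w, T.G.Adj a w := fun hl => hlab (T.leaf_labelled a hl)
      obtain ⟨c, hc1, hc2⟩ : ∃ c, T.G.Adj a c ∧ c ≠ b := by
        by_contra hcon
        push_neg at hcon
        exact hnl ⟨b, h, fun y hy => hcon y hy⟩
      have hca : T.G.Adj c a := hc1.symm
      -- the component of c in G - s(c,a) is contained in component of a minus {a}
      have hsub : (Finset.univ.filter
          (fun z => (T.G.deleteEdges {s(c,a)}).Reachable c z)) ⊆
          (Finset.univ.filter
          (fun z => (T.G.deleteEdges {s(a,b)}).Reachable a z)).erase a := by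
        intro z hz
        rw [Finset.mem_filter] at hz
        obtain ⟨p⟩ := hz.2
        have hap : a ∉ p.support := by
          intro hap
          exact not_reach_across hca ⟨p.takeUntil a hap⟩
        rw [Finset.mem_erase]
        constructor
        · intro hza; exact hap (hza ▸ p.end_mem_support)
        · rw [Finset.mem_filter]
          refine ⟨Finset.mem_univ _, ?_⟩
          have h1 : (T.G.deleteEdges {s(a,b)}).Reachable c z :=
            reach_delete_of_not_support p hap
          have hadj : (T.G.deleteEdges {s(a,b)}).Adj a c := by
            rw [SimpleGraph.deleteEdges_adj]
            refine ⟨hc1, ?_⟩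
            simp only [Set.mem_singleton_iff, Sym2.eq_iff]
            rintro (⟨-, h2⟩ | ⟨h1, -⟩)
            · exact hc2 h2
            · exact (T.G.ne_of_adj h) h1
          exact hadj.reachable.trans h1
      obtain ⟨x, hx⟩ := ih hca (by
        have h1 := Finset.card_le_card hsub
        have h2 : a ∈ Finset.univ.filter
            (fun z => (T.G.deleteEdges {s(a,b)}).Reachable a z) := by
          simp [Reachable.refl]
        rw [Finset.card_erase_of_mem h2] at h1
        omega)
      refine ⟨x, mem_sideL.mpr ?_⟩
      have hlabx : (T.G.deleteEdges {s(c,a)}).Reachable c (T.lab x) := mem_sideL.mp hx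
      obtain ⟨p⟩ := hlabx
      have hap : a ∉ p.support := by
        intro hap
        exact not_reach_across hca ⟨p.takeUntil a hap⟩
      have h1 : (T.G.deleteEdges {s(a,b)}).Reachable c (T.lab x) :=
        reach_delete_of_not_support p hap
      have hadj : (T.G.deleteEdges {s(a,b)}).Adj a c := by
        rw [SimpleGraph.deleteEdges_adj]
        refine ⟨hc1, ?_⟩
        simp only [Set.mem_singleton_iff, Sym2.eq_iff]
        rintro (⟨-, h2⟩ | ⟨h1, -⟩)
        · exact hc2 h2
        · exact (T.G.ne_of_adj h) h1
      exact hadj.reachable.trans h1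

lemma sideL_nonempty {e : Sym2 T.V} (he : e ∈ T.G.edgeSet) (w : T.V) :
    (sideL T w e).Nonempty := by
  induction e using Sym2.ind with
  | _ a b =>
    rw [SimpleGraph.mem_edgeSet] at he
    rcases sideL_two he w with h1 | h1
    · rw [h1]
      obtain ⟨x, hx⟩ := sideL_nonempty_aux (T := T)
        (Finset.univ.filter
          (fun z => (T.G.deleteEdges {s(a,b)}).Reachable a z)).card he le_rfl
      exact ⟨x, hx⟩
    · rw [h1]
      have hsw : s(a,b) = s(b,a) := Sym2.eq_swap
      rw [hsw]
      obtain ⟨x, hx⟩ := sideL_nonempty_aux (T := T)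
        (Finset.univ.filter
          (fun z => (T.G.deleteEdges {s(b,a)}).Reachable b z)).card he.symm le_rfl
      exact ⟨x, hx⟩

lemma reach_of_not_mem_edges {e : Sym2 T.V} {u w : T.V} (p : T.G.Walk u w)
    (hmem : e ∉ p.edges) : (T.G.deleteEdges {e}).Reachable u w :=
  ⟨p.toDeleteEdges {e} (fun f hf => by
    simp only [Set.mem_singleton_iff]
    intro hfe
    exact hmem (hfe ▸ hf))⟩

lemma not_mem_edges_of_reach {a b : T.V} (h : T.G.Adj a b) :
    ∀ {u w : T.V} (p : T.G.Walk u w), p.IsPath →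
      (T.G.deleteEdges {s(a,b)}).Reachable u w → s(a,b) ∉ p.edges := by
  intro u w p
  induction p with
  | nil => simp
  | @cons u c w h' q ih =>
    intro hp hr hmem
    have hp' := (SimpleGraph.Walk.cons_isPath_iff h' q).mp hp
    have hqfresh : s(u,c) ∉ q.edges := fun hq =>
      hp'.2 (SimpleGraph.Walk.fst_mem_support_of_mem_edges q hq)
    rw [SimpleGraph.Walk.edges_cons, List.mem_cons] at hmem
    rcases hmem with heq | hmem'
    · -- s(a,b) = s(u,c)
      have hq : (T.G.deleteEdges {s(a,b)}).Reachable c w :=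
        reach_of_not_mem_edges q (by rw [heq]; exact hqfresh)
      have huc : (T.G.deleteEdges {s(a,b)}).Reachable u c := hr.trans hq.symm
      rcases Sym2.eq_iff.mp heq with ⟨rfl, rfl⟩ | ⟨rfl, rfl⟩
      · exact not_reach_across h huc
      · exact not_reach_across h huc.symm
    · have hne : s(u,c) ≠ s(a,b) := fun hh => hqfresh (hh ▸ hmem')
      have hadj : (T.G.deleteEdges {s(a,b)}).Adj u c := by
        rw [SimpleGraph.deleteEdges_adj]; exact ⟨h', by simpa using hne⟩
      exact ih hp'.1 (hadj.reachable.symm.trans hr) hmem'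

lemma first_edge_subset {u c w : T.V} (h : T.G.Adj u c) (q : T.G.Walk c w)
    (hq : q.IsPath) (hu : u ∉ q.support) {g : Sym2 T.V} (hg : g ∈ q.edges) :
    sideL T u s(u,c) ⊆ sideL T u g := by
  revert hg
  induction g using Sym2.ind with
  | _ d1 d2 =>
    intro hg x hx
    rw [mem_sideL] at hx ⊢
    by_contra hng
    obtain ⟨p1, hp1⟩ := reachable_walk (T := T) u (T.lab x)
    have hgp : s(d1,d2) ∈ p1.edges := by
      by_contra hnm
      exact hng (reach_of_not_mem_edges p1 hnm)
    have hd1p : d1 ∈ p1.support := SimpleGraph.Walk.fst_mem_support_of_mem_edges _ hgp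
    have hd1q : d1 ∈ q.support := SimpleGraph.Walk.fst_mem_support_of_mem_edges q hg
    have hpath1 : (SimpleGraph.Walk.cons h (q.takeUntil d1 hd1q)).IsPath := by
      rw [SimpleGraph.Walk.cons_isPath_iff]
      exact ⟨hq.takeUntil _, fun hsup => hu (q.support_takeUntil_subset _ hsup)⟩
    have hpath2 : (p1.takeUntil d1 hd1p).IsPath := hp1.takeUntil _
    have hequ : SimpleGraph.Walk.cons h (q.takeUntil d1 hd1q) = p1.takeUntil d1 hd1p :=
      path_unique' hpath1 hpath2
    have hmem : s(u,c) ∈ p1.edges := by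
      have h1 : s(u,c) ∈ (SimpleGraph.Walk.cons h (q.takeUntil d1 hd1q)).edges := by
        rw [SimpleGraph.Walk.edges_cons]; exact List.mem_cons_self
      rw [hequ] at h1
      exact SimpleGraph.Walk.edges_takeUntil_subset _ _ h1
    exact not_mem_edges_of_reach h p1 hp1 hx hmem

lemma chain_comparable :
    ∀ {u w : T.V} (p : T.G.Walk u w), p.IsPath → ∀ {e f : Sym2 T.V},
      e ∈ p.edges → f ∈ p.edges →
      sideL T u e ⊆ sideL T u f ∨ sideL T u f ⊆ sideL T u e := by
  intro u w p
  induction p with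
  | nil => intro _ e f he _; simp at he
  | @cons u c w h q ih =>
    intro hp e f he hf
    have hp' := (SimpleGraph.Walk.cons_isPath_iff h q).mp hp
    have hside : ∀ g ∈ q.edges, sideL T u g = sideL T c g := by
      intro g hg
      refine sideL_adj_other h ?_
      intro hgeq
      exact hp'.2 (SimpleGraph.Walk.fst_mem_support_of_mem_edges q (hgeq ▸ hg))
    rw [SimpleGraph.Walk.edges_cons, List.mem_cons] at he hf
    rcases he with rfl | he
    · rcases hf with rfl | hf
      · exact Or.inl subset_rfl
      · exact Or.inl (first_edge_subset h q hp'.1 hp'.2 hf)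
    · rcases hf with rfl | hf
      · exact Or.inr (first_edge_subset h q hp'.1 hp'.2 he)
      · rcases ih hp'.1 he hf with h1 | h1
        · exact Or.inl (by rw [hside e he, hside f hf]; exact h1)
        · exact Or.inr (by rw [hside e he, hside f hf]; exact h1)

lemma cons_add_singleton_comm {α : Type*} (a b : α) (s : Multiset α) :
    (a ::ₘ s) + {b} = (b ::ₘ s) + {a} := by
  rw [Multiset.cons_add, Multiset.cons_add, add_comm s {b}, add_comm s {a},
    Multiset.singleton_add, Multiset.singleton_add, Multiset.cons_swap]

lemma sideL_compl_nonempty {e : Sym2 T.V} (he : e ∈ T.G.edgeSet) (w : T.V) :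
    ((sideL T w e)ᶜ).Nonempty := by
  induction e using Sym2.ind with
  | _ a b =>
    rw [SimpleGraph.mem_edgeSet] at he
    rcases sideL_two he w with h1 | h1
    · rw [h1, ← sideL_compl he]
      exact sideL_nonempty (T.G.mem_edgeSet.mpr he) b
    · rw [h1, sideL_compl he, compl_compl]
      exact sideL_nonempty (T.G.mem_edgeSet.mpr he) a

lemma compl_not_subset {B : Finset X} (hB : B.Nonempty) (hBc : (Bᶜ).Nonempty) :
    ¬(B ⊆ Bᶜ ∨ Bᶜ ⊆ B) := by
  rintro (h1 | h1)
  · obtain ⟨x, hx⟩ := hB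
    exact (Finset.mem_compl.mp (h1 hx)) hx
  · obtain ⟨x, hx⟩ := hBc
    exact (Finset.mem_compl.mp hx) (h1 hx)

lemma mm_adj_eq {u v : T.V} (h : T.G.Adj u v) :
    mm T v + {sideL T u s(u,v)} = mm T u + {(sideL T u s(u,v))ᶜ} := by
  have hval : s(u,v) ∈ T.G.edgeFinset.val := by
    rw [Finset.mem_val, SimpleGraph.mem_edgeFinset, SimpleGraph.mem_edgeSet]; exact h
  have hnd : T.G.edgeFinset.val.Nodup := T.G.edgeFinset.nodup
  have ht : s(u,v) ::ₘ T.G.edgeFinset.val.erase s(u,v) = T.G.edgeFinset.val :=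
    Multiset.cons_erase hval
  have hrest : ∀ f ∈ T.G.edgeFinset.val.erase s(u,v), sideL T v f = sideL T u f := by
    intro f hf
    have hne : f ≠ s(u,v) := ((Multiset.Nodup.mem_erase_iff hnd).mp hf).1
    exact (sideL_adj_other h hne).symm
  rw [mm, mm, ← ht, Multiset.map_cons, Multiset.map_cons,
    Multiset.map_congr rfl hrest, sideL_compl h]
  exact cons_add_singleton_comm _ _ _

lemma mm_telescope :
    ∀ {u w : T.V} (p : T.G.Walk u w), p.IsPath →
      mm T w + (p.edges : Multiset (Sym2 T.V)).map (fun e => sideL T u e) =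
      mm T u + (p.edges : Multiset (Sym2 T.V)).map (fun e => (sideL T u e)ᶜ) := by
  intro u w p
  induction p with
  | nil => simp
  | @cons u c w h q ih =>
    intro hp
    have hp' := (SimpleGraph.Walk.cons_isPath_iff h q).mp hp
    have ihc := ih hp'.1
    have hside : ∀ g ∈ (q.edges : Multiset (Sym2 T.V)), sideL T c g = sideL T u g := by
      intro g hg
      refine (sideL_adj_other h ?_).symm
      intro hgeq
      rw [Multiset.mem_coe] at hg
      exact hp'.2 (SimpleGraph.Walk.fst_mem_support_of_mem_edges q (hgeq ▸ hg))
    rw [Multiset.map_congr rfl hside] at ihc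
    rw [Multiset.map_congr rfl (fun g hg => congrArg compl (hside g hg))] at ihc
    have hA := mm_adj_eq h
    rw [SimpleGraph.Walk.edges_cons, ← Multiset.cons_coe, Multiset.map_cons, Multiset.map_cons]
    rw [← Multiset.singleton_add, ← Multiset.singleton_add (((sideL T u s(u,c))ᶜ))]
    calc mm T w + ({sideL T u s(u,c)} + (q.edges : Multiset (Sym2 T.V)).map (fun e => sideL T u e))
        = (mm T w + (q.edges : Multiset (Sym2 T.V)).map (fun e => sideL T u e)) + {sideL T u s(u,c)} := by
          rw [add_assoc, add_comm ({sideL T u s(u,c)} : Multiset (Finset X))]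
      _ = (mm T c + (q.edges : Multiset (Sym2 T.V)).map (fun e => (sideL T u e)ᶜ)) + {sideL T u s(u,c)} := by
          rw [ihc]
      _ = (mm T c + {sideL T u s(u,c)}) + (q.edges : Multiset (Sym2 T.V)).map (fun e => (sideL T u e)ᶜ) := by
          rw [add_assoc, add_assoc, add_comm ({sideL T u s(u,c)} : Multiset (Finset X))]
      _ = (mm T u + {(sideL T u s(u,c))ᶜ}) + (q.edges : Multiset (Sym2 T.V)).map (fun e => (sideL T u e)ᶜ) := by
          rw [hA]
      _ = mm T u + ({(sideL T u s(u,c))ᶜ} + (q.edges : Multiset (Sym2 T.V)).map (fun e => (sideL T u e)ᶜ)) := by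
          rw [add_assoc]

lemma exists_first_edge {u v : T.V} (hne : u ≠ v) (p : T.G.Walk u v) :
    ∃ e, e ∈ p.edges := by
  cases p with
  | nil => exact absurd rfl hne
  | cons h q => exact ⟨_, by rw [SimpleGraph.Walk.edges_cons]; exact List.mem_cons_self⟩

lemma mm_inj {u v : T.V} (h : mm T u = mm T v) : u = v := by
  by_contra hne
  obtain ⟨p, hp⟩ := reachable_walk (T := T) u v
  have htel := mm_telescope p hp
  rw [h] at htel
  have hS : (p.edges : Multiset (Sym2 T.V)).map (fun e => sideL T u e) =
      (p.edges : Multiset (Sym2 T.V)).map (fun e => (sideL T u e)ᶜ) :=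
    add_left_cancel htel
  obtain ⟨e, he⟩ := exists_first_edge hne p
  have hA : sideL T u e ∈ (p.edges : Multiset (Sym2 T.V)).map (fun e => (sideL T u e)ᶜ) := by
    rw [← hS]
    exact Multiset.mem_map_of_mem _ (Multiset.mem_coe.mpr he)
  obtain ⟨f, hf, hfe⟩ := Multiset.mem_map.mp hA
  rw [Multiset.mem_coe] at hf
  have hcomp := chain_comparable p hp he hf
  rw [← hfe] at hcomp
  have hBne := sideL_nonempty (p.edges_subset_edgeSet hf) u
  have hBcne := sideL_compl_nonempty (p.edges_subset_edgeSet hf) u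
  rcases hcomp with h1 | h1
  · exact compl_not_subset hBne hBcne (Or.inr h1)
  · exact compl_not_subset hBne hBcne (Or.inl h1)

lemma adj_of_mm {u v : T.V} (hne : mm T u ≠ mm T v) {A : Finset X}
    (heq : mm T v + {A} = mm T u + {Aᶜ}) : T.G.Adj u v := by
  have huv : u ≠ v := fun h => hne (by rw [h])
  obtain ⟨p, hp⟩ := reachable_walk (T := T) u v
  have htel := mm_telescope p hp
  set S := (p.edges : Multiset (Sym2 T.V)).map (fun e => sideL T u e) with hSdef
  set Sc := (p.edges : Multiset (Sym2 T.V)).map (fun e => (sideL T u e)ᶜ) with hScdef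
  have hkey : S + {Aᶜ} = {A} + Sc := by
    have h1 : mm T v + (S + {Aᶜ}) = mm T v + ({A} + Sc) := by
      rw [← add_assoc, htel, add_assoc, add_comm Sc, ← add_assoc, ← heq, add_assoc]
    exact add_left_cancel h1
  have hAA : A ≠ Aᶜ := by
    intro hAA
    have heq2 := heq
    rw [← hAA] at heq2
    exact hne (add_right_cancel heq2).symm
  have hAS : A ∈ S := by
    have : A ∈ S + {Aᶜ} := by
      rw [hkey]; exact Multiset.mem_add.mpr (Or.inl (Multiset.mem_singleton_self _))
    rcases Multiset.mem_add.mp this with h1 | h1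
    · exact h1
    · exact absurd (Multiset.mem_singleton.mp h1) hAA
  have hall : ∀ B ∈ S, B = A := by
    intro B hB
    obtain ⟨e, he, hBe⟩ := Multiset.mem_map.mp hB
    have hBc : Bᶜ ∈ S + {Aᶜ} := by
      rw [hkey]
      refine Multiset.mem_add.mpr (Or.inr ?_)
      rw [hScdef]
      exact Multiset.mem_map.mpr ⟨e, he, by rw [hBe]⟩
    rcases Multiset.mem_add.mp hBc with h1 | h1
    · exfalso
      obtain ⟨f, hf, hfe⟩ := Multiset.mem_map.mp h1
      rw [Multiset.mem_coe] at he hf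
      have hcomp := chain_comparable p hp hf he
      rw [hfe, hBe] at hcomp
      have hBne := sideL_nonempty (p.edges_subset_edgeSet he) u
      rw [hBe] at hBne
      have hBcne := sideL_compl_nonempty (p.edges_subset_edgeSet he) u
      rw [hBe] at hBcne
      exact compl_not_subset hBne hBcne hcomp.symm
    · have := Multiset.mem_singleton.mp h1
      have : B = A := by
        have := congrArg compl this
        rwa [compl_compl, compl_compl] at this
      exact this
  have hrep : S = Multiset.replicate (Multiset.card S) A :=
    Multiset.eq_replicate.mpr ⟨rfl, hall⟩
  have hSc : Sc = S.map compl := by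
    rw [hSdef, hScdef, Multiset.map_map]
    rfl
  have hcount := congrArg (Multiset.count A) hkey
  rw [hSc, hrep, Multiset.map_replicate] at hcount
  rw [Multiset.count_add, Multiset.count_add, Multiset.count_replicate_self,
    Multiset.count_singleton, Multiset.count_singleton, Multiset.count_replicate,
    if_pos rfl, if_neg hAA, if_neg (show ¬ Aᶜ = A from fun h => hAA h.symm)] at hcount
  have hcard : Multiset.card S = 1 := by omega
  have hlen : p.length = 1 := by
    have : Multiset.card S = p.edges.length := by
      rw [hSdef, Multiset.card_map, Multiset.coe_card]
    rw [this] at hcard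
    rwa [SimpleGraph.Walk.length_edges] at hcard
  cases p with
  | nil => simp at hlen
  | cons h q =>
    have : q.length = 0 := by
      rw [SimpleGraph.Walk.length_cons] at hlen
      omega
    have := SimpleGraph.Walk.eq_of_length_eq_zero this
    rwa [this] at h

lemma mm_pred_of_adj {u v : T.V} (h : T.G.Adj u v) :
    mm T u ≠ mm T v ∧ ∃ A : Finset X, mm T v + {A} = mm T u + {Aᶜ} := by
  refine ⟨fun he => h.ne (mm_inj he), ⟨sideL T u s(u,v), mm_adj_eq h⟩⟩

noncomputable def partAt (x : X) (σ : Finset (Finset X)) : Finset X :=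
  σ.sup (fun A => if x ∈ A then A else ∅)

lemma sideL_eq_of_common {a b : T.V} (h : T.G.Adj a b) {u w : T.V} {x : X}
    (hu : x ∈ sideL T u s(a,b)) (hw : x ∈ sideL T w s(a,b)) :
    sideL T u s(a,b) = sideL T w s(a,b) := by
  have hc := sideL_compl h
  rcases sideL_two h u with h1 | h1 <;> rcases sideL_two h w with h2 | h2
  · rw [h1, h2]
  · exfalso
    rw [h1] at hu
    rw [h2, hc] at hw
    exact (Finset.mem_compl.mp hw) hu
  · exfalso
    rw [h1, hc] at hu
    rw [h2] at hw
    exact (Finset.mem_compl.mp hu) hw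
  · rw [h1, h2]

lemma partAt_splitOf {x : X} {e : Sym2 T.V} (he : e ∈ T.G.edgeSet) :
    partAt x (T.splitOf e) = sideL T (T.lab x) e := by
  induction e using Sym2.ind with
  | _ a b =>
    rw [SimpleGraph.mem_edgeSet] at he
    have hx : x ∈ sideL T (T.lab x) s(a,b) := mem_sideL.mpr (Reachable.refl _)
    rw [partAt, splitOf_eq_image, Finset.sup_image]
    apply le_antisymm
    · apply Finset.sup_le
      intro u _
      simp only [Function.comp]
      by_cases hxu : x ∈ sideL T u s(a,b)
      · rw [if_pos hxu, sideL_eq_of_common he hxu hx]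
      · rw [if_neg hxu]
        exact bot_le
    · have hle := Finset.le_sup (f := (fun A => if x ∈ A then A else ∅) ∘
          (fun u => sideL T u s(a,b))) (Finset.mem_univ (T.lab x))
      simp only [Function.comp, if_pos hx] at hle
      exact hle

lemma mm_lab (x : X) : mm T (T.lab x) = (T.splits).map (partAt x) := by
  rw [WeakXTree.splits, mm, Multiset.map_map]
  apply Multiset.map_congr rfl
  intro e he
  have hee : e ∈ T.G.edgeSet := by
    rw [← SimpleGraph.mem_edgeFinset]
    exact he
  exact (partAt_splitOf hee).symm

lemma pair_le_map_destruct {γ δ : Type*} [DecidableEq γ] [DecidableEq δ]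
    (l : Multiset γ) (hl : l.Nodup) (f : γ → δ) {A B : δ}
    (h : ({A, B} : Multiset δ) ≤ l.map f) :
    ∃ e ∈ l, ∃ g ∈ l, e ≠ g ∧ f e = A ∧ f g = B := by
  have hA : A ∈ l.map f := Multiset.mem_of_le h (by simp)
  obtain ⟨e, he, hfe⟩ := Multiset.mem_map.mp hA
  have hB : B ∈ (l.map f).erase A := by
    have h2 := Multiset.erase_le_erase A h
    have h3 : ({A, B} : Multiset δ).erase A = {B} := by
      rw [show ({A, B} : Multiset δ) = A ::ₘ {B} from rfl, Multiset.erase_cons_head]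
    rw [h3] at h2
    exact Multiset.mem_of_le h2 (Multiset.mem_singleton_self _)
  have hmap : (l.map f).erase A = (l.erase e).map f := by
    conv_lhs => rw [← Multiset.cons_erase he, Multiset.map_cons, hfe, Multiset.erase_cons_head]
  rw [hmap] at hB
  obtain ⟨g, hg, hfg⟩ := Multiset.mem_map.mp hB
  have hgl := (Multiset.Nodup.mem_erase_iff hl).mp hg
  exact ⟨e, he, g, hgl.2, fun hh => hgl.1 hh.symm, hfe, hfg⟩

lemma pair_le_map_construct {γ δ : Type*} [DecidableEq γ]
    (l : Multiset γ) (f : γ → δ) {e g : γ} (he : e ∈ l) (hg : g ∈ l) (hne : e ≠ g) :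
    ({f e, f g} : Multiset δ) ≤ l.map f := by
  have hg' : g ∈ l.erase e := Multiset.mem_erase_of_ne (fun hh => hne hh.symm) |>.mpr hg
  calc ({f e, f g} : Multiset δ) = f e ::ₘ f g ::ₘ 0 := rfl
    _ ≤ f e ::ₘ f g ::ₘ ((l.erase e).erase g).map f := by
        apply Multiset.cons_le_cons
        apply Multiset.cons_le_cons
        exact Multiset.zero_le _
    _ = l.map f := by
        rw [← Multiset.map_cons, ← Multiset.map_cons, Multiset.cons_erase hg',
          Multiset.cons_erase he]

lemma mm_coherent {v : T.V} {A B : Finset X}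
    (hAB : ({A, B} : Multiset (Finset X)) ≤ mm T v) :
    A ∩ B ≠ ∅ ∨ A ∪ B = Finset.univ := by
  obtain ⟨e, he, f, hf, hef, hA, hB⟩ :=
    pair_le_map_destruct _ T.G.edgeFinset.nodup _ hAB
  by_cases hun : A ∪ B = Finset.univ
  · exact Or.inr hun
  left
  obtain ⟨x, hx⟩ : ∃ x, x ∉ A ∪ B := by
    by_contra hcon
    push_neg at hcon
    exact hun (Finset.eq_univ_of_forall hcon)
  rw [Finset.mem_union] at hx
  push_neg at hx
  obtain ⟨p, hp⟩ := reachable_walk (T := T) v (T.lab x)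
  have heE : e ∈ T.G.edgeSet := by rwa [← SimpleGraph.mem_edgeFinset, ← Finset.mem_val]
  have hfE : f ∈ T.G.edgeSet := by rwa [← SimpleGraph.mem_edgeFinset, ← Finset.mem_val]
  have hep : e ∈ p.edges := by
    by_contra hnm
    have := reach_of_not_mem_edges p hnm
    have : x ∈ sideL T v e := mem_sideL.mpr this
    rw [hA] at this
    exact hx.1 this
  have hfp : f ∈ p.edges := by
    by_contra hnm
    have := reach_of_not_mem_edges p hnm
    have : x ∈ sideL T v f := mem_sideL.mpr this
    rw [hB] at this
    exact hx.2 this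
  have hcomp := chain_comparable p hp hep hfp
  rw [hA, hB] at hcomp
  have hAne : A.Nonempty := by rw [← hA]; exact sideL_nonempty heE v
  have hBne : B.Nonempty := by rw [← hB]; exact sideL_nonempty hfE v
  rcases hcomp with h1 | h1
  · rw [Finset.inter_eq_left.mpr h1]
    exact Finset.nonempty_iff_ne_empty.mp hAne
  · rw [Finset.inter_eq_right.mpr h1]
    exact Finset.nonempty_iff_ne_empty.mp hBne

lemma ne_compl_of_nonempty {A : Finset X} (hA : A.Nonempty) : A ≠ Aᶜ := by
  intro h
  obtain ⟨x, hx⟩ := hA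
  exact (Finset.mem_compl.mp (h ▸ hx)) hx

lemma splitOf_cases {e : Sym2 T.V} (he : e ∈ T.G.edgeSet) {C : Finset X}
    (hC : C ∈ T.splitOf e) (w : T.V) : sideL T w e = C ∨ sideL T w e = Cᶜ := by
  induction e using Sym2.ind with
  | _ a b =>
    rw [SimpleGraph.mem_edgeSet] at he
    rw [splitOf_eq_image] at hC
    obtain ⟨u, -, hu⟩ := Finset.mem_image.mp hC
    have hcpl := sideL_compl he
    rcases sideL_two he u with h1 | h1 <;> rcases sideL_two he w with h2 | h2
    · left; rw [h2, ← hu, h1]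
    · right; rw [h2, hcpl, ← hu, h1]
    · right; rw [h2, ← hu, h1, hcpl, compl_compl]
    · left; rw [h2, ← hu, h1]

lemma cross_wrong {w u₁ : T.V} (h : T.G.Adj w u₁) {c : Sym2 T.V → Finset X}
    (hcg : c s(w,u₁) ∈ T.splitOf s(w,u₁))
    (hwrong : sideL T w s(w,u₁) ≠ c s(w,u₁)) :
    (T.G.edgeFinset.filter (fun f => sideL T u₁ f ≠ c f)) =
      (T.G.edgeFinset.filter (fun f => sideL T w f ≠ c f)).erase s(w,u₁) := by
  have hw' : sideL T w s(w,u₁) = (c s(w,u₁))ᶜ := by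
    rcases splitOf_cases (T.G.mem_edgeSet.mpr h) hcg w with h1 | h1
    · exact absurd h1 hwrong
    · exact h1
  have hu₁ : sideL T u₁ s(w,u₁) = c s(w,u₁) := by
    rw [sideL_compl h, hw', compl_compl]
  ext f
  simp only [Finset.mem_erase, Finset.mem_filter]
  by_cases hfg : f = s(w,u₁)
  · subst hfg
    constructor
    · rintro ⟨-, hne⟩
      exact absurd hu₁ hne
    · rintro ⟨hne, -⟩
      exact absurd rfl hne
  · have hss : sideL T w f = sideL T u₁ f := sideL_adj_other h hfg
    constructor
    · rintro ⟨hfE, hne⟩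
      exact ⟨hfg, hfE, by rwa [hss]⟩
    · rintro ⟨-, hfE, hne⟩
      exact ⟨hfE, by rwa [← hss]⟩

lemma exists_good_endpoint {f₀ : Sym2 T.V} (hf₀ : f₀ ∈ T.G.edgeSet) {C : Finset X}
    (hC : C ∈ T.splitOf f₀) :
    ∃ d, sideL T d f₀ = C ∧ ∀ {y z : T.V} (p : T.G.Walk y z), f₀ ∈ p.edges → d ∈ p.support := by
  induction f₀ using Sym2.ind with
  | _ a b =>
    rw [SimpleGraph.mem_edgeSet] at hf₀
    rw [splitOf_eq_image] at hC
    obtain ⟨u, -, hu⟩ := Finset.mem_image.mp hC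
    rcases sideL_two hf₀ u with h1 | h1
    · exact ⟨a, by rw [← hu, h1], fun p hp =>
        SimpleGraph.Walk.fst_mem_support_of_mem_edges p hp⟩
    · exact ⟨b, by rw [← hu, h1], fun p hp =>
        SimpleGraph.Walk.snd_mem_support_of_mem_edges p hp⟩

lemma map_update_swap {γ δ : Type*} [DecidableEq γ] (l : Multiset γ) (hl : l.Nodup)
    (c : γ → δ) {g f₀ : γ} (hg : g ∈ l) (hf : f₀ ∈ l) (hne : g ≠ f₀) :
    l.map (Function.update (Function.update c g (c f₀)) f₀ (c g)) = l.map c := by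
  set c₁ := Function.update (Function.update c g (c f₀)) f₀ (c g) with hc₁
  have hf' : f₀ ∈ l.erase g := (Multiset.mem_erase_of_ne (Ne.symm hne)).mpr hf
  have hnd' : (l.erase g).Nodup := hl.erase g
  have hc₁g : c₁ g = c f₀ := by
    rw [hc₁, Function.update_of_ne hne, Function.update_self]
  have hc₁f : c₁ f₀ = c g := by
    rw [hc₁, Function.update_self]
  have hrest : ∀ x ∈ (l.erase g).erase f₀, c₁ x = c x := by
    intro x hx
    have h1 := (Multiset.Nodup.mem_erase_iff hnd').mp hx
    have h2 := (Multiset.Nodup.mem_erase_iff hl).mp h1.2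
    rw [hc₁, Function.update_of_ne h1.1, Function.update_of_ne h2.1]
  calc l.map c₁ = (g ::ₘ f₀ ::ₘ (l.erase g).erase f₀).map c₁ := by
        rw [Multiset.cons_erase hf', Multiset.cons_erase hg]
    _ = c₁ g ::ₘ c₁ f₀ ::ₘ ((l.erase g).erase f₀).map c₁ := by
        rw [Multiset.map_cons, Multiset.map_cons]
    _ = c f₀ ::ₘ c g ::ₘ ((l.erase g).erase f₀).map c := by
        rw [hc₁g, hc₁f, Multiset.map_congr rfl hrest]
    _ = c g ::ₘ c f₀ ::ₘ ((l.erase g).erase f₀).map c := Multiset.cons_swap _ _ _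
    _ = (g ::ₘ f₀ ::ₘ (l.erase g).erase f₀).map c := by
        rw [Multiset.map_cons, Multiset.map_cons]
    _ = l.map c := by
        rw [Multiset.cons_erase hf', Multiset.cons_erase hg]

lemma complete_aux :
    ∀ (n : ℕ) (w : T.V) (c : Sym2 T.V → Finset X),
      (∀ f ∈ T.G.edgeFinset, c f ∈ T.splitOf f) →
      (∀ A B : Finset X, ({A, B} : Multiset (Finset X)) ≤ T.G.edgeFinset.val.map c →
        A ∩ B ≠ ∅ ∨ A ∪ B = Finset.univ) →
      (T.G.edgeFinset.filter (fun f => sideL T w f ≠ c f)).card ≤ n →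
      ∃ v', mm T v' = T.G.edgeFinset.val.map c := by
  intro n
  induction n with
  | zero =>
    intro w c hc hcoh hcard
    refine ⟨w, ?_⟩
    rw [mm]
    apply Multiset.map_congr rfl
    intro f hf
    rw [Finset.mem_val] at hf
    by_contra hne
    have : f ∈ T.G.edgeFinset.filter (fun f => sideL T w f ≠ c f) :=
      Finset.mem_filter.mpr ⟨hf, hne⟩
    have := Finset.card_pos.mpr ⟨f, this⟩
    omega
  | succ n ih =>
    intro w c hc hcoh hcard
    by_cases h0 : (T.G.edgeFinset.filter (fun f => sideL T w f ≠ c f)).card = 0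
    · exact ih w c hc hcoh (by omega)
    obtain ⟨f₀, hf₀mem⟩ := Finset.card_pos.mp (Nat.pos_of_ne_zero h0)
    rw [Finset.mem_filter] at hf₀mem
    obtain ⟨hf₀E, hf₀⟩ := hf₀mem
    have hf₀S : f₀ ∈ T.G.edgeSet := SimpleGraph.mem_edgeFinset.mp hf₀E
    have hcf₀ := hc f₀ hf₀E
    have hwf₀ : sideL T w f₀ = (c f₀)ᶜ := by
      rcases splitOf_cases hf₀S hcf₀ w with h1 | h1
      · exact absurd h1 hf₀
      · exact h1
    obtain ⟨d, hd, hdsup⟩ := exists_good_endpoint hf₀S hcf₀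
    have hnr : ¬ (T.G.deleteEdges {f₀}).Reachable w d := by
      intro hr
      exact hf₀ (by rw [sideL_eq_of_reach hr, hd])
    have hwd : w ≠ d := by
      rintro rfl
      exact hnr (Reachable.refl _)
    obtain ⟨p, hp⟩ := reachable_walk (T := T) w d
    cases p with
    | nil => exact absurd rfl hwd
    | @cons _ u₁ _ h q =>
      have hp' := (SimpleGraph.Walk.cons_isPath_iff h q).mp hp
      have hgE : s(w,u₁) ∈ T.G.edgeFinset := SimpleGraph.mem_edgeFinset.mpr (T.G.mem_edgeSet.mpr h)
      have hf₀p : f₀ ∈ (SimpleGraph.Walk.cons h q).edges := by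
        by_contra hnm
        exact hnr (reach_of_not_mem_edges _ hnm)
      by_cases hg : sideL T w s(w,u₁) = c s(w,u₁)
      · -- first edge is "right": swap the pairing at g and f₀, making g wrong.
        have hgf₀ : s(w,u₁) ≠ f₀ := by
          intro hh
          rw [hh] at hg
          exact hf₀ hg
        -- c f₀ ⊆ (c g)ᶜ
        have hsub : c f₀ ⊆ (c s(w,u₁))ᶜ := by
          intro x hx
          rw [Finset.mem_compl]
          intro hxg
          -- x ∈ c g = sideL w g ; also x ∈ c f₀ so x ∉ sideL w f₀
          have hxnw : x ∉ sideL T w f₀ := by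
            rw [hwf₀, Finset.mem_compl]
            exact fun hh => hh hx
          obtain ⟨p2, hp2⟩ := reachable_walk (T := T) w (T.lab x)
          have hf₀2 : f₀ ∈ p2.edges := by
            by_contra hnm
            exact hxnw (mem_sideL.mpr (reach_of_not_mem_edges p2 hnm))
          have hd2 : d ∈ p2.support := hdsup p2 hf₀2
          have huniq : p2.takeUntil d hd2 = SimpleGraph.Walk.cons h q :=
            path_unique' (hp2.takeUntil hd2) hp
          have hg2 : s(w,u₁) ∈ p2.edges := by
            apply SimpleGraph.Walk.edges_takeUntil_subset p2 hd2
            rw [huniq, SimpleGraph.Walk.edges_cons]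
            exact List.mem_cons_self
          have hxreach : (T.G.deleteEdges {s(w,u₁)}).Reachable w (T.lab x) := by
            rw [← hg] at hxg
            exact mem_sideL.mp hxg
          exact not_mem_edges_of_reach h p2 hp2 hxreach hg2
        have hpair := hcoh (c s(w,u₁)) (c f₀)
          (pair_le_map_construct T.G.edgeFinset.val c
            (Finset.mem_val.mpr hgE) (Finset.mem_val.mpr hf₀E) hgf₀)
        have hdisj : c s(w,u₁) ∩ c f₀ = ∅ := by
          rw [Finset.eq_empty_iff_forall_notMem]
          intro x hx
          rw [Finset.mem_inter] at hx
          exact (Finset.mem_compl.mp (hsub hx.2)) hx.1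
        have hcompl : c f₀ = (c s(w,u₁))ᶜ := by
          apply le_antisymm hsub
          intro x hx
          rcases hpair with h1 | h1
          · exact absurd hdisj h1
          · rcases Finset.mem_union.mp (h1 ▸ Finset.mem_univ x) with h2 | h2
            · exact absurd h2 (Finset.mem_compl.mp hx)
            · exact h2
        set c₁ := Function.update (Function.update c s(w,u₁) (c f₀)) f₀ (c s(w,u₁)) with hc₁def
        have hc₁g : c₁ s(w,u₁) = c f₀ := by
          rw [hc₁def, Function.update_of_ne hgf₀, Function.update_self]
        have hc₁f : c₁ f₀ = c s(w,u₁) := by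
          rw [hc₁def, Function.update_self]
        have hc₁other : ∀ f, f ≠ s(w,u₁) → f ≠ f₀ → c₁ f = c f := by
          intro f h1 h2
          rw [hc₁def, Function.update_of_ne h2, Function.update_of_ne h1]
        have hmap : T.G.edgeFinset.val.map c₁ = T.G.edgeFinset.val.map c :=
          map_update_swap _ T.G.edgeFinset.nodup c
            (Finset.mem_val.mpr hgE) (Finset.mem_val.mpr hf₀E) hgf₀
        have hc₁valid : ∀ f ∈ T.G.edgeFinset, c₁ f ∈ T.splitOf f := by
          intro f hf
          by_cases h1 : f = s(w,u₁)
          · subst h1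
            rw [hc₁g, hcompl, ← hg, ← sideL_compl h]
            exact sideL_mem_splitOf u₁ _
          · by_cases h2 : f = f₀
            · subst h2
              rw [hc₁f, show c s(w,u₁) = (c f)ᶜ by rw [hcompl, compl_compl], ← hwf₀]
              exact sideL_mem_splitOf w _
            · rw [hc₁other f h1 h2]
              exact hc f hf
        have hgwrong : sideL T w s(w,u₁) ≠ c₁ s(w,u₁) := by
          rw [hc₁g, hcompl, ← hg]
          exact ne_compl_of_nonempty (sideL_nonempty (T.G.mem_edgeSet.mpr h) w)
        -- card of wrong set for c₁ at w equals card for c at w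
        have hfilter : (T.G.edgeFinset.filter (fun f => sideL T w f ≠ c₁ f)) =
            insert s(w,u₁) ((T.G.edgeFinset.filter (fun f => sideL T w f ≠ c f)).erase f₀) := by
          ext f
          simp only [Finset.mem_insert, Finset.mem_erase, Finset.mem_filter]
          by_cases h1 : f = s(w,u₁)
          · subst h1
            simp only [true_or, iff_true]
            exact ⟨hgE, hgwrong⟩
          · by_cases h2 : f = f₀
            · subst h2
              constructor
              · rintro ⟨-, hne⟩
                exfalso
                apply hne
                rw [hc₁f, hwf₀, hcompl, compl_compl]
              · rintro (h3 | ⟨h3, -⟩)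
                · exact absurd h3 h1
                · exact absurd rfl h3
            · rw [hc₁other f h1 h2]
              constructor
              · rintro ⟨hfE, hne⟩
                exact Or.inr ⟨h2, hfE, hne⟩
              · rintro (h3 | ⟨-, hfE, hne⟩)
                · exact absurd h3 h1
                · exact ⟨hfE, hne⟩
        have hcoh₁ : ∀ A B : Finset X, ({A, B} : Multiset (Finset X)) ≤
            T.G.edgeFinset.val.map c₁ → A ∩ B ≠ ∅ ∨ A ∪ B = Finset.univ := by
          intro A B hAB
          rw [hmap] at hAB
          exact hcoh A B hAB
        -- now cross the edge g with pairing c₁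
        have hcross := cross_wrong h (hc₁valid _ hgE) hgwrong
        have hcard₁ : (T.G.edgeFinset.filter (fun f => sideL T u₁ f ≠ c₁ f)).card ≤ n := by
          rw [hcross, hfilter]
          have hgnotin : s(w,u₁) ∉
              (T.G.edgeFinset.filter (fun f => sideL T w f ≠ c f)).erase f₀ := by
            intro hh
            have := (Finset.mem_erase.mp hh).2
            rw [Finset.mem_filter] at this
            exact this.2 hg
          rw [Finset.erase_insert hgnotin]
          have hf₀in : f₀ ∈ T.G.edgeFinset.filter (fun f => sideL T w f ≠ c f) :=
            Finset.mem_filter.mpr ⟨hf₀E, hf₀⟩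
          have h1 := Finset.card_erase_of_mem hf₀in
          have h2 := Finset.card_pos.mpr ⟨f₀, hf₀in⟩
          omega
        obtain ⟨v', hv'⟩ := ih u₁ c₁ hc₁valid hcoh₁ hcard₁
        exact ⟨v', by rw [hv', hmap]⟩
      · -- first edge is wrong already: cross it.
        have hcross := cross_wrong h (hc _ hgE) hg
        have hgin : s(w,u₁) ∈ T.G.edgeFinset.filter (fun f => sideL T w f ≠ c f) :=
          Finset.mem_filter.mpr ⟨hgE, hg⟩
        have hcard₁ : (T.G.edgeFinset.filter (fun f => sideL T u₁ f ≠ c f)).card ≤ n := by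
          rw [hcross]
          have h1 := Finset.card_erase_of_mem hgin
          have h2 := Finset.card_pos.mpr ⟨s(w,u₁), hgin⟩
          omega
        exact ih u₁ c hc hcoh hcard₁

lemma map_rel_map {γ δ ε : Type*} {r : δ → ε → Prop} {f : γ → δ} {g : γ → ε}
    (E : Multiset γ) (h : ∀ e ∈ E, r (f e) (g e)) :
    Multiset.Rel r (E.map f) (E.map g) := by
  induction E using Multiset.induction with
  | empty => simpa using Multiset.Rel.zero
  | cons a s ihs =>
    rw [Multiset.map_cons, Multiset.map_cons]
    exact Multiset.Rel.cons (h a (Multiset.mem_cons_self a s))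
      (ihs (fun e he => h e (Multiset.mem_cons_of_mem he)))

lemma exists_pairing {α β : Type*} [DecidableEq β] [Inhabited α] (r : α → β → Prop) :
    ∀ (l : Multiset β), l.Nodup → ∀ (M : Multiset α), Multiset.Rel r M l →
      ∃ c : β → α, (∀ b ∈ l, r (c b) b) ∧ l.map c = M := by
  intro l
  induction l using Multiset.induction with
  | empty =>
    intro _ M hM
    rw [Multiset.rel_zero_right] at hM
    exact ⟨fun _ => default, by simp, by simp [hM]⟩
  | cons b l' ih =>
    intro hnd M hM
    have hnd' := Multiset.nodup_cons.mp hnd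
    obtain ⟨a, M', hab, hM', rfl⟩ := Multiset.rel_cons_right.mp hM
    obtain ⟨c', hc'1, hc'2⟩ := ih hnd'.2 M' hM'
    refine ⟨Function.update c' b a, ?_, ?_⟩
    · intro b' hb'
      rcases Multiset.mem_cons.mp hb' with rfl | hb'
      · rw [Function.update_self]
        exact hab
      · rw [Function.update_of_ne (fun hh => hnd'.1 (by rw [← hh]; exact hb'))]
        exact hc'1 b' hb'
    · rw [Multiset.map_cons, Function.update_self]
      congr 1
      rw [← hc'2]
      apply Multiset.map_congr rfl
      intro b' hb'
      rw [Function.update_of_ne (fun hh => hnd'.1 (by rw [← hh]; exact hb'))]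

lemma exists_mm_eq {T T' : WeakXTree X} (h : T.splits = T'.splits) (v : T.V) :
    ∃ v' : T'.V, mm T' v' = mm T v := by
  have hrel : Multiset.Rel (fun (A : Finset X) (σ : Finset (Finset X)) => A ∈ σ)
      (mm T v) (T.splits) := by
    rw [mm, WeakXTree.splits]
    exact map_rel_map _ (fun e _ => sideL_mem_splitOf v e)
  rw [h, WeakXTree.splits] at hrel
  have hrel2 : Multiset.Rel (fun (A : Finset X) (f : Sym2 T'.V) => A ∈ T'.splitOf f)
      (mm T v) T'.G.edgeFinset.val := by
    have := Multiset.rel_map (p := fun (A : Finset X) (σ : Finset (Finset X)) => A ∈ σ)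
      (f := id) (g := T'.splitOf) (s := mm T v) (t := T'.G.edgeFinset.val)
    rw [Multiset.map_id] at this
    exact this.mp hrel
  obtain ⟨c, hc1, hc2⟩ := exists_pairing _ T'.G.edgeFinset.val T'.G.edgeFinset.nodup _ hrel2
  have hcvalid : ∀ f ∈ T'.G.edgeFinset, c f ∈ T'.splitOf f := by
    intro f hf
    exact hc1 f (Finset.mem_val.mpr hf)
  have hcoh : ∀ A B : Finset X, ({A, B} : Multiset (Finset X)) ≤
      T'.G.edgeFinset.val.map c → A ∩ B ≠ ∅ ∨ A ∪ B = Finset.univ := by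
    intro A B hAB
    rw [hc2] at hAB
    exact mm_coherent hAB
  have hw : Nonempty T'.V := T'.isTree.isConnected.nonempty
  obtain ⟨w⟩ := hw
  obtain ⟨v', hv'⟩ := complete_aux (T := T')
    (T'.G.edgeFinset.filter (fun f => sideL T' w f ≠ c f)).card w c hcvalid hcoh le_rfl
  exact ⟨v', by rw [hv', hc2]⟩

end SplitsEquiv

/-- Splits-Equivalence, uniqueness part: two weak X-trees with the
same multiset of displayed splits are isomorphic. -/
theorem stmt_1 {X : Type} [Fintype X] [DecidableEq X] (hX : 2 ≤ Fintype.card X)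
    (T T' : WeakXTree X) (h : T.splits = T'.splits) :
    T.Isomorphic T' := by
  classical
  have hF := fun v => (SplitsEquiv.exists_mm_eq h v).choose_spec
  have hG := fun v' => (SplitsEquiv.exists_mm_eq h.symm v').choose_spec
  set F : T.V → T'.V := fun v => (SplitsEquiv.exists_mm_eq h v).choose with hFdef
  set G : T'.V → T.V := fun v' => (SplitsEquiv.exists_mm_eq h.symm v').choose with hGdef
  have hleft : ∀ v, G (F v) = v := by
    intro v
    apply SplitsEquiv.mm_inj
    rw [hG (F v), hF v]
  have hright : ∀ v', F (G v') = v' := by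
    intro v'
    apply SplitsEquiv.mm_inj
    rw [hF (G v'), hG v']
  refine ⟨⟨F, G, hleft, hright⟩, ?_, ?_⟩
  · intro u v
    constructor
    · intro hadj
      obtain ⟨hne, A, heq⟩ := SplitsEquiv.mm_pred_of_adj hadj
      refine SplitsEquiv.adj_of_mm (T := T') ?_ (A := A) ?_
      · simp only [Equiv.coe_fn_mk]
        rw [hF u, hF v]
        exact hne
      · simp only [Equiv.coe_fn_mk]
        rw [hF u, hF v]
        exact heq
    · intro hadj
      obtain ⟨hne, A, heq⟩ := SplitsEquiv.mm_pred_of_adj hadj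
      simp only [Equiv.coe_fn_mk] at hne heq
      rw [hF u, hF v] at hne heq
      exact SplitsEquiv.adj_of_mm (T := T) hne heq
  · intro x
    apply SplitsEquiv.mm_inj (T := T')
    simp only [Equiv.coe_fn_mk]
    rw [hF (T.lab x), SplitsEquiv.mm_lab, SplitsEquiv.mm_lab, h]
end

section
/- Let Π be a compatible partition system on X, let T_Π = (T;φ) be the weak X-tree with Σ(T_Π) = Σ_Π, let u be a vertex of T_Π with φ⁻¹(u) ≠ ∅, let e be an edge of T_Π incident with u, and let B be the part of the split σ_e with φ⁻¹(u) ⊆ B. Then there exists a partition π ∈ Π with B ∈ π. -/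
open scoped Classical

variable {X : Type} [Fintype X] [DecidableEq X]

section Aux2
open SimpleGraph

variable {V : Type} {G : SimpleGraph V}

lemma walk_delete_cases' (u v : V) {a b : V} (W : G.Walk a b) :
    (G.deleteEdges {s(u,v)}).Reachable a b ∨
    ((G.deleteEdges {s(u,v)}).Reachable a u ∧ (G.deleteEdges {s(u,v)}).Reachable v b) ∨
    ((G.deleteEdges {s(u,v)}).Reachable a v ∧ (G.deleteEdges {s(u,v)}).Reachable u b) := by
  induction W with
  | nil => exact Or.inl (Reachable.refl _)
  | @cons a c b h q ih =>
    by_cases hec : s(a,c) = s(u,v)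
    · rw [Sym2.eq_iff] at hec
      rcases hec with ⟨rfl, rfl⟩ | ⟨rfl, rfl⟩
      · rcases ih with h1 | ⟨h1, h2⟩ | ⟨h1, h2⟩
        · exact Or.inr (Or.inl ⟨Reachable.refl _, h1⟩)
        · exact Or.inl (h1.symm.trans h2)
        · exact Or.inl h2
      · rcases ih with h1 | ⟨h1, h2⟩ | ⟨h1, h2⟩
        · exact Or.inr (Or.inr ⟨Reachable.refl _, h1⟩)
        · exact Or.inl h2
        · exact Or.inl (h1.symm.trans h2)
    · have hadj : (G.deleteEdges {s(u,v)}).Adj a c := by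
        rw [SimpleGraph.deleteEdges_adj]
        exact ⟨h, by simpa using hec⟩
      rcases ih with h1 | ⟨h1, h2⟩ | ⟨h1, h2⟩
      · exact Or.inl (hadj.reachable.trans h1)
      · exact Or.inr (Or.inl ⟨hadj.reachable.trans h1, h2⟩)
      · exact Or.inr (Or.inr ⟨hadj.reachable.trans h1, h2⟩)

lemma reach_two_sides' (hconn : G.Connected) (u v : V)
    (hbr : ¬ (G.deleteEdges {s(u,v)}).Reachable u v) (w : V) :
    (G.deleteEdges {s(u,v)}).Reachable u w ∨ (G.deleteEdges {s(u,v)}).Reachable v w := by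
  obtain ⟨W⟩ := hconn.preconnected u w
  rcases walk_delete_cases' u v W with h1 | ⟨h1, h2⟩ | ⟨h1, h2⟩
  · exact Or.inl h1
  · exact Or.inr h2
  · exact absurd h1 hbr

lemma reach_delete_transfer' {e : Sym2 V} {p q : V} {w z : V}
    (h : (G.deleteEdges {e}).Reachable w z)
    (hnp : ¬ (G.deleteEdges {e}).Reachable w p) :
    (G.deleteEdges {s(p,q)}).Reachable w z := by
  obtain ⟨W⟩ := h
  by_cases hf : s(p,q) ∈ W.edges
  · exact absurd ⟨W.takeUntil p (W.fst_mem_support_of_mem_edges hf)⟩ hnp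
  · refine ⟨W.transfer (G.deleteEdges {s(p,q)}) ?_⟩
    intro e' he'
    have h1 := W.edges_subset_edgeSet he'
    rw [SimpleGraph.edgeSet_deleteEdges] at h1 ⊢
    refine ⟨h1.1, ?_⟩
    simp only [Set.mem_singleton_iff]
    rintro rfl
    exact hf he'

lemma bridge_of_tree (hT : G.IsTree) {p q : V} (h : G.Adj p q) :
    ¬ (G.deleteEdges {s(p,q)}).Reachable p q := by
  have hb := (SimpleGraph.isAcyclic_iff_forall_adj_isBridge.mp hT.IsAcyclic) h
  exact SimpleGraph.isBridge_iff.mp hb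

end Aux2

/-- if `u` is a labelled vertex of `T_Π`, `e` an edge incident with
`u`, and `B` the part of `σ_e` containing the labels of `u`, then `B` is a part
of some partition in `Π`. -/
theorem stmt_2 {X : Type} [Fintype X] [DecidableEq X] (hX : 2 ≤ Fintype.card X)
    (P : Multiset (Finset (Finset X))) (hP : IsPartitionSystem P)
    (hcomp : CompatibleSystem (systemSplits P))
    (T : WeakXTree X) (hT : T.splits = systemSplits P)
    (u : T.V) (hu : ∃ x : X, T.lab x = u)
    (e : Sym2 T.V) (he : e ∈ T.G.edgeSet) (hue : u ∈ e)
    (B : Finset X) (hB : B ∈ T.splitOf e)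
    (hsub : ∀ x : X, T.lab x = u → x ∈ B) :
    ∃ π ∈ P, B ∈ π := by
  classical
  obtain ⟨x₀, hx₀⟩ := hu
  obtain ⟨v, rfl⟩ : ∃ v, e = s(u, v) := by
    induction e using Sym2.ind with
    | _ a b =>
      rcases Sym2.mem_iff.mp hue with rfl | rfl
      · exact ⟨b, rfl⟩
      · exact ⟨a, Sym2.eq_swap⟩
  have hadj : T.G.Adj u v := he
  set R : Sym2 T.V → T.V → Finset X := fun f w =>
    Finset.univ.filter (fun x : X => (T.G.deleteEdges {f}).Reachable w (T.lab x)) with hR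
  have hRmem : ∀ f w x, x ∈ R f w ↔ (T.G.deleteEdges {f}).Reachable w (T.lab x) := by
    intro f w x; simp [hR]
  have hsplitdef : ∀ f, T.splitOf f = Finset.image (R f) Finset.univ := fun f => rfl
  have hReq : ∀ (f : Sym2 T.V) {w w' : T.V},
      (T.G.deleteEdges {f}).Reachable w w' → R f w = R f w' := by
    intro f w w' h
    ext x
    rw [hRmem, hRmem]
    exact ⟨fun h' => h.symm.trans h', fun h' => h.trans h'⟩
  have himg : ∀ (p q : T.V), T.G.Adj p q → ∀ S ∈ T.splitOf s(p,q),
      S = R s(p,q) p ∨ S = R s(p,q) q := by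
    intro p q hpq S hS
    rw [hsplitdef] at hS
    obtain ⟨w, -, rfl⟩ := Finset.mem_image.mp hS
    rcases reach_two_sides' T.isTree.isConnected p q (bridge_of_tree T.isTree hpq) w with h | h
    · exact Or.inl (hReq _ h).symm
    · exact Or.inr (hReq _ h).symm
  have hbr_e : ¬ (T.G.deleteEdges {s(u,v)}).Reachable u v := bridge_of_tree T.isTree hadj
  -- B is the u-side
  have hx₀u : x₀ ∈ R s(u,v) u := by rw [hRmem, hx₀]
  have hx₀v : x₀ ∉ R s(u,v) v := by
    rw [hRmem, hx₀]
    exact fun h => hbr_e h.symm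
  have hBu : B = R s(u,v) u := by
    rcases himg u v hadj B hB with h | h
    · exact h
    · exact absurd (h ▸ hsub x₀ hx₀) hx₀v
  -- the split of e comes from some partition
  have hmemS : T.splitOf s(u,v) ∈ systemSplits P := by
    rw [← hT]
    exact Multiset.mem_map_of_mem _ (Finset.mem_val.mpr (SimpleGraph.mem_edgeFinset.mpr he))
  obtain ⟨π, hπP, hmem2⟩ := Multiset.mem_bind.mp hmemS
  obtain ⟨C, hCπ, hCe⟩ := Multiset.mem_map.mp hmem2
  rw [Finset.mem_val] at hCπ
  obtain ⟨hne, huniq⟩ := (hP π hπP).1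
  have hdisj : ∀ {A A' : Finset X}, A ∈ π → A' ∈ π → ∀ z, z ∈ A → z ∈ A' → A = A' :=
    fun hA hA' z hz hz' => (huniq z).unique ⟨hA, hz⟩ ⟨hA', hz'⟩
  have hBC : B = C ∨ B = Cᶜ := by
    have : B ∈ ({C, Cᶜ} : Finset (Finset X)) := hCe ▸ hB
    simpa using this
  rcases hBC with hBC | hBC
  · exact ⟨π, hπP, hBC ▸ hCπ⟩
  -- case B = Cᶜ
  obtain ⟨c, hc⟩ := hne C hCπ
  have hCne : C ≠ Cᶜ := fun h => (Finset.mem_compl.mp (h ▸ hc)) hc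
  have hCcu : Cᶜ = R s(u,v) u := hBC.symm.trans hBu
  have hCv : C = R s(u,v) v := by
    have hCmem : C ∈ T.splitOf s(u,v) := by
      rw [← hCe]; exact Finset.mem_insert_self _ _
    rcases himg u v hadj C hCmem with h | h
    · exact absurd (h.trans hCcu.symm) hCne
    · exact h
  have hx₀Cc : x₀ ∈ Cᶜ := hBC ▸ hsub x₀ hx₀
  obtain ⟨A₂, ⟨hA₂π, hx₀A₂⟩, -⟩ := huniq x₀
  by_cases hA₂cc : A₂ = Cᶜ
  · exact ⟨π, hπP, by rw [hBC, ← hA₂cc]; exact hA₂π⟩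
  · exfalso
    have hA₂C : A₂ ≠ C := fun h => (Finset.mem_compl.mp hx₀Cc) (h ▸ hx₀A₂)
    have hA₂sub : A₂ ⊆ Cᶜ := fun z hz => Finset.mem_compl.mpr
      (fun hzC => hA₂C (hdisj hA₂π hCπ z hz hzC))
    obtain ⟨y, hyCc, hyA₂⟩ := Finset.exists_of_ssubset (hA₂sub.ssubset_of_ne hA₂cc)
    -- the split {A₂, A₂ᶜ} is displayed by an edge f
    have hA₂split : ({A₂, A₂ᶜ} : Finset (Finset X)) ∈ T.splits := by
      rw [hT]
      exact Multiset.mem_bind.mpr ⟨π, hπP,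
        Multiset.mem_map.mpr ⟨A₂, Finset.mem_val.mpr hA₂π, rfl⟩⟩
    obtain ⟨f, hf, hfsplit⟩ := Multiset.mem_map.mp hA₂split
    have hfe : f ∈ T.G.edgeSet := SimpleGraph.mem_edgeFinset.mp (Finset.mem_val.mp hf)
    obtain ⟨p', q', rfl⟩ : ∃ p q, f = s(p, q) := by
      induction f using Sym2.ind with
      | _ a b => exact ⟨a, b, rfl⟩
    have key : ∀ p q : T.V, T.G.Adj p q → T.splitOf s(p,q) = {A₂, A₂ᶜ} →
        A₂ = R s(p,q) p → False := by
      intro p q hpq hsp hA₂R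
      have hbr_f : ¬ (T.G.deleteEdges {s(p,q)}).Reachable p q := bridge_of_tree T.isTree hpq
      have hA₂A₂c : A₂ ≠ A₂ᶜ := fun h => (Finset.mem_compl.mp (h ▸ hx₀A₂)) hx₀A₂
      have hA₂cq : A₂ᶜ = R s(p,q) q := by
        have hmem : A₂ᶜ ∈ T.splitOf s(p,q) := by
          rw [hsp]; exact Finset.mem_insert_of_mem (Finset.mem_singleton_self _)
        rcases himg p q hpq _ hmem with h | h
        · exact absurd (h.trans hA₂R.symm).symm hA₂A₂c
        · exact h
      have hef : s(u,v) ≠ s(p,q) := by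
        intro h
        have : ({C, Cᶜ} : Finset (Finset X)) = {A₂, A₂ᶜ} := by
          rw [hCe, h, hsp]
        have : A₂ ∈ ({C, Cᶜ} : Finset (Finset X)) := by
          rw [this]; exact Finset.mem_insert_self _ _
        rcases Finset.mem_insert.mp this with h' | h'
        · exact hA₂C h'
        · exact hA₂cc (Finset.mem_singleton.mp h')
      have hpu : (T.G.deleteEdges {s(p,q)}).Reachable p u := by
        have := (hRmem s(p,q) p x₀).mp (hA₂R ▸ hx₀A₂)
        rwa [hx₀] at this
      have hfadjuv : (T.G.deleteEdges {s(p,q)}).Adj u v := by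
        rw [SimpleGraph.deleteEdges_adj]
        exact ⟨hadj, by simpa using hef⟩
      have hpv : (T.G.deleteEdges {s(p,q)}).Reachable p v := hpu.trans hfadjuv.reachable
      rcases reach_two_sides' T.isTree.isConnected u v hbr_e p with hup | hvp
      · -- p on the u-side of e; use c ∈ C
        have hvc : (T.G.deleteEdges {s(u,v)}).Reachable v (T.lab c) :=
          (hRmem _ _ _).mp (hCv ▸ hc)
        have hnvp : ¬ (T.G.deleteEdges {s(u,v)}).Reachable v p :=
          fun h => hbr_e (hup.trans h.symm)
        have hfvc : (T.G.deleteEdges {s(p,q)}).Reachable v (T.lab c) :=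
          reach_delete_transfer' hvc hnvp
        have hcA₂c : c ∈ A₂ᶜ := Finset.mem_compl.mpr
          (fun hcA₂ => Finset.mem_compl.mp (hA₂sub hcA₂) hc)
        have hqc : (T.G.deleteEdges {s(p,q)}).Reachable q (T.lab c) :=
          (hRmem _ _ _).mp (hA₂cq ▸ hcA₂c)
        exact hbr_f ((hpv.trans hfvc).trans hqc.symm)
      · -- p on the v-side of e; use y
        have huy : (T.G.deleteEdges {s(u,v)}).Reachable u (T.lab y) :=
          (hRmem _ _ _).mp (hCcu ▸ hyCc)
        have hnup : ¬ (T.G.deleteEdges {s(u,v)}).Reachable u p :=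
          fun h => hbr_e (h.trans hvp.symm)
        have hfuy : (T.G.deleteEdges {s(p,q)}).Reachable u (T.lab y) :=
          reach_delete_transfer' huy hnup
        have hyA₂c : y ∈ A₂ᶜ := Finset.mem_compl.mpr hyA₂
        have hqy : (T.G.deleteEdges {s(p,q)}).Reachable q (T.lab y) :=
          (hRmem _ _ _).mp (hA₂cq ▸ hyA₂c)
        exact hbr_f ((hpu.trans hfuy).trans hqy.symm)
    have hadjf : T.G.Adj p' q' := hfe
    have hA₂mem : A₂ ∈ T.splitOf s(p',q') := by
      rw [hfsplit]; exact Finset.mem_insert_self _ _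
    rcases himg p' q' hadjf A₂ hA₂mem with h | h
    · exact key p' q' hadjf hfsplit h
    · exact key q' p' hadjf.symm (by rwa [Sym2.eq_swap]) (by rwa [Sym2.eq_swap])
end

section
/- Let Π be a compatible partition system on X, let π ∈ Π, and let E_π be a subset of edges of T_Π = (T;φ) that displays π. Let V₁, V₂, …, V_k denote the vertex sets of the components of T_Π∖E_π. Then k = |π| + 1 and {φ⁻¹(V₁), φ⁻¹(V₂), …, φ⁻¹(V_k)} = π ∪ {∅}, i.e., exactly one component carries no labels and the label sets of the remaining components are precisely the parts of π. -/
open scoped Classical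

variable {X : Type} [Fintype X] [DecidableEq X]

namespace StmtAux
open SimpleGraph

variable {V : Type} {G : SimpleGraph V}

lemma reach_delete_mono {s t : Set (Sym2 V)} (hst : s ⊆ t) {u v : V}
    (h : (G.deleteEdges t).Reachable u v) : (G.deleteEdges s).Reachable u v := by
  refine h.mono ?_
  intro a b hab
  rw [SimpleGraph.deleteEdges_adj] at hab ⊢
  exact ⟨hab.1, fun hm => hab.2 (hst hm)⟩

lemma edge_not_mem_path (hG : G.IsTree) {u v : V} {p : G.Walk u v} (hp : p.IsPath)
    {e : Sym2 V} (hr : (G.deleteEdges {e}).Reachable u v) : e ∉ p.edges := by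
  obtain ⟨q⟩ := hr
  have hq : q.toPath.1.IsPath := q.toPath.2
  have hmap : ((q.toPath.1.map (Hom.ofLE (G.deleteEdges_le {e})))).IsPath :=
    SimpleGraph.Walk.map_isPath_of_injective (fun a b hab => hab) hq
  have huniq := hG.existsUnique_path u v
  obtain ⟨r, -, hruniq⟩ := huniq
  have h1 : p = q.toPath.1.map (Hom.ofLE (G.deleteEdges_le {e})) := by
    rw [hruniq p hp, hruniq _ hmap]
  intro hmem
  rw [h1, SimpleGraph.Walk.edges_map] at hmem
  obtain ⟨e', he', heq⟩ := List.mem_map.mp hmem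
  have : e' ∈ (G.deleteEdges {e}).edgeSet := q.toPath.1.edges_subset_edgeSet he'
  rw [SimpleGraph.edgeSet_deleteEdges] at this
  apply this.2
  have : Sym2.map (Hom.ofLE (G.deleteEdges_le {e})) e' = e' := by
    refine Sym2.ind (fun a b => ?_) e'
    rfl
  rw [this] at heq
  simp [heq]

lemma reachable_deleteEdges_iff (hG : G.IsTree) {E : Set (Sym2 V)} {u v : V} :
    (G.deleteEdges E).Reachable u v ↔ ∀ e ∈ E, (G.deleteEdges {e}).Reachable u v := by
  constructor
  · intro h e he
    exact reach_delete_mono (by simpa using he) h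
  · intro h
    obtain ⟨w⟩ := hG.isConnected.preconnected u v
    refine ⟨w.toPath.1.toDeleteEdges E (fun e he hmem => ?_)⟩
    exact edge_not_mem_path hG w.toPath.2 (h e hmem) he

lemma reach_delete_of_walk {a b : V} {u v : V} (w : G.Walk u v) :
    (G.deleteEdges {s(a,b)}).Reachable u v ∨
      (G.deleteEdges {s(a,b)}).Reachable u a ∨ (G.deleteEdges {s(a,b)}).Reachable u b := by
  induction w with
  | nil => exact Or.inl (Reachable.refl _)
  | @cons u x v h p ih =>
    by_cases he : s(u, x) = s(a, b)
    · rw [Sym2.eq_iff] at he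
      rcases he with ⟨rfl, rfl⟩ | ⟨rfl, rfl⟩
      · exact Or.inr (Or.inl (Reachable.refl _))
      · exact Or.inr (Or.inr (Reachable.refl _))
    · have h' : (G.deleteEdges {s(a,b)}).Adj u x := by
        rw [SimpleGraph.deleteEdges_adj]
        exact ⟨h, by simpa using he⟩
      rcases ih with hr | hr | hr
      · exact Or.inl (h'.reachable.trans hr)
      · exact Or.inr (Or.inl (h'.reachable.trans hr))
      · exact Or.inr (Or.inr (h'.reachable.trans hr))

lemma reach_a_or_b {a b u : V} (h : G.Reachable u a) :
    (G.deleteEdges {s(a,b)}).Reachable u a ∨ (G.deleteEdges {s(a,b)}).Reachable u b := by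
  obtain ⟨w⟩ := h
  rcases reach_delete_of_walk (a := a) (b := b) w with hr | hr | hr
  · exact Or.inl hr
  · exact Or.inl hr
  · exact Or.inr hr

end StmtAux

namespace StmtAux
open SimpleGraph

variable {V : Type} {G : SimpleGraph V}

lemma card_cc_deleteBridge [Finite V] {e : Sym2 V} (hbr : G.IsBridge e) (heG : e ∈ G.edgeSet) :
    Nat.card (G.deleteEdges {e}).ConnectedComponent
      = Nat.card G.ConnectedComponent + 1 := by
  revert hbr heG
  refine Sym2.ind (fun a b hbr heG => ?_) e
  rw [isBridge_iff] at hbr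
  obtain ⟨hadj, hnr⟩ : G.Adj a b ∧ _ := ⟨heG, hbr⟩
  have hnr : ¬ (G.deleteEdges {s(a,b)}).Reachable a b := hnr
  set G' := G.deleteEdges {s(a,b)} with hG'
  set f : G'.ConnectedComponent → G.ConnectedComponent :=
    SimpleGraph.ConnectedComponent.map (Hom.ofLE (G.deleteEdges_le {s(a,b)}))
    with hf
  have hfmk : ∀ u : V, f (G'.connectedComponentMk u) = G.connectedComponentMk u :=
    fun u => rfl
  haveI : Fintype G'.ConnectedComponent := Fintype.ofFinite _
  haveI : Fintype G.ConnectedComponent := Fintype.ofFinite _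
  rw [Nat.card_eq_fintype_card, Nat.card_eq_fintype_card]
  have hcount := Finset.card_eq_sum_card_fiberwise
    (f := f) (s := Finset.univ) (t := Finset.univ) (fun x _ => Finset.mem_univ _)
  have hfib : ∀ c : G.ConnectedComponent,
      (Finset.univ.filter (fun c' => f c' = c)).card
        = if c = G.connectedComponentMk a then 2 else 1 := by
    intro c
    induction c using SimpleGraph.ConnectedComponent.ind with
    | _ v =>
    by_cases hc : G.connectedComponentMk v = G.connectedComponentMk a
    · rw [if_pos hc]
      have hset : Finset.univ.filter (fun c' => f c' = G.connectedComponentMk v)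
          = {G'.connectedComponentMk a, G'.connectedComponentMk b} := by
        ext c'
        simp only [Finset.mem_filter, Finset.mem_univ, true_and, Finset.mem_insert,
          Finset.mem_singleton]
        constructor
        · intro hfc
          induction c' using SimpleGraph.ConnectedComponent.ind with
          | _ u =>
          rw [hfmk] at hfc
          have hru : G.Reachable u a :=
            SimpleGraph.ConnectedComponent.exact (hfc.trans hc)
          rcases reach_a_or_b (b := b) hru with h | h
          · exact Or.inl (SimpleGraph.ConnectedComponent.sound h)
          · exact Or.inr (SimpleGraph.ConnectedComponent.sound h)
        · rintro (rfl | rfl)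
          · rw [hfmk, hc]
          · rw [hfmk, hc]
            exact SimpleGraph.ConnectedComponent.sound hadj.reachable.symm
      rw [hset, Finset.card_insert_of_notMem, Finset.card_singleton]
      simp only [Finset.mem_singleton]
      intro h
      exact hnr (SimpleGraph.ConnectedComponent.exact h)
    · rw [if_neg hc, Finset.card_eq_one]
      refine ⟨G'.connectedComponentMk v, ?_⟩
      ext c'
      simp only [Finset.mem_filter, Finset.mem_univ, true_and, Finset.mem_singleton]
      constructor
      · intro hfc
        induction c' using SimpleGraph.ConnectedComponent.ind with
        | _ u =>
        rw [hfmk] at hfc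
        have hru : G.Reachable u v := SimpleGraph.ConnectedComponent.exact hfc
        obtain ⟨w⟩ := hru
        rcases reach_delete_of_walk (a := a) (b := b) w with h | h | h
        · exact SimpleGraph.ConnectedComponent.sound h
        · exfalso
          apply hc
          have : G.Reachable u a := h.mono (G.deleteEdges_le _)
          rw [← hfc]
          exact SimpleGraph.ConnectedComponent.sound this
        · exfalso
          apply hc
          have : G.Reachable u a := (h.mono (G.deleteEdges_le _)).trans hadj.reachable.symm
          rw [← hfc]
          exact SimpleGraph.ConnectedComponent.sound this
      · rintro rfl
        exact hfmk v
  rw [← Finset.card_univ, hcount]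
  have h2 : ∀ c : G.ConnectedComponent,
      (if c = G.connectedComponentMk a then 2 else 1)
        = 1 + (if c = G.connectedComponentMk a then 1 else 0) := by
    intro c; split <;> rfl
  rw [Finset.sum_congr rfl (fun c _ => (hfib c).trans (h2 c)), Finset.sum_add_distrib]
  rw [Finset.sum_ite_eq' Finset.univ (G.connectedComponentMk a) (fun _ => 1)]
  simp [Finset.card_univ, Nat.add_comm]

end StmtAux

namespace StmtAux
open SimpleGraph

variable {V : Type} {G : SimpleGraph V}

lemma isBridge_of_le {H : SimpleGraph V} (hle : H ≤ G) {e : Sym2 V}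
    (he : e ∈ H.edgeSet) (hbr : G.IsBridge e) : H.IsBridge e := by
  revert he hbr
  refine Sym2.ind (fun a b he hbr => ?_) e
  rw [isBridge_iff] at hbr ⊢
  rw [SimpleGraph.mem_edgeSet] at he
  refine fun hr => hbr ?_
  have : (H.deleteEdges {s(a,b)}) ≤ (G.deleteEdges {s(a,b)}) := by
    intro x y hxy
    rw [SimpleGraph.deleteEdges_adj] at hxy ⊢
    exact ⟨hle hxy.1, hxy.2⟩
  exact Reachable.mono this hr

lemma card_cc_tree_connected (hG : G.Connected) :
    Nat.card G.ConnectedComponent = 1 := by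
  haveI : Subsingleton G.ConnectedComponent :=
    ⟨SimpleGraph.ConnectedComponent.ind₂ fun u v =>
      SimpleGraph.ConnectedComponent.sound (hG.preconnected u v)⟩
  haveI : Nonempty G.ConnectedComponent := by
    obtain ⟨v⟩ := hG.nonempty
    exact ⟨G.connectedComponentMk v⟩
  exact Nat.card_eq_one_iff_unique.mpr ⟨inferInstance, inferInstance⟩

lemma card_cc_deleteEdges [Finite V] (hG : G.IsTree) (E : Finset (Sym2 V))
    (hE : ↑E ⊆ G.edgeSet) :
    Nat.card (G.deleteEdges (↑E : Set (Sym2 V))).ConnectedComponent = E.card + 1 := by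
  classical
  induction E using Finset.induction_on with
  | empty =>
    rw [Finset.coe_empty, SimpleGraph.deleteEdges_empty, Finset.card_empty]
    exact card_cc_tree_connected hG.isConnected
  | @insert e s he ih =>
    have hsub : (↑s : Set (Sym2 V)) ⊆ G.edgeSet := by
      intro x hx
      exact hE (by simp [hx])
    have heG : e ∈ G.edgeSet := hE (by simp)
    have hcoe : (↑(insert e s) : Set (Sym2 V)) = (↑s : Set (Sym2 V)) ∪ {e} := by
      rw [Finset.coe_insert, Set.insert_eq, Set.union_comm]
    have hdel : G.deleteEdges (↑(insert e s) : Set (Sym2 V))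
        = (G.deleteEdges ↑s).deleteEdges {e} := by
      rw [SimpleGraph.deleteEdges_deleteEdges, hcoe]
    have hbr : (G.deleteEdges (↑s : Set (Sym2 V))).IsBridge e := by
      refine isBridge_of_le (G.deleteEdges_le _) ?_
        (isAcyclic_iff_forall_edge_isBridge.mp hG.IsAcyclic heG)
      rw [SimpleGraph.edgeSet_deleteEdges]
      exact ⟨heG, by simpa using he⟩
    rw [hdel, card_cc_deleteBridge hbr (by rw [SimpleGraph.edgeSet_deleteEdges]; exact ⟨heG, by simpa using he⟩), ih hsub, Finset.card_insert_of_notMem he]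

end StmtAux

namespace StmtAux

lemma side_of_split {X : Type} [Fintype X] [DecidableEq X] (T : WeakXTree X)
    (e : Sym2 T.V) (A : Finset X) (hsp : T.splitOf e = {A, Aᶜ}) {x : X} (hx : x ∈ A)
    (y : X) : (T.G.deleteEdges {e}).Reachable (T.lab x) (T.lab y) ↔ y ∈ A := by
  classical
  have hmem : (Finset.univ.filter (fun z : X =>
      (T.G.deleteEdges {e}).Reachable (T.lab x) (T.lab z))) ∈ T.splitOf e :=
    Finset.mem_image_of_mem _ (Finset.mem_univ (T.lab x))
  rw [hsp] at hmem
  have hS : (Finset.univ.filter (fun z : X =>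
      (T.G.deleteEdges {e}).Reachable (T.lab x) (T.lab z))) = A := by
    rcases Finset.mem_insert.mp hmem with h | h
    · exact h
    · rw [Finset.mem_singleton] at h
      exfalso
      have hxS : x ∈ Finset.univ.filter (fun z : X =>
          (T.G.deleteEdges {e}).Reachable (T.lab x) (T.lab z)) :=
        Finset.mem_filter.mpr ⟨Finset.mem_univ x, SimpleGraph.Reachable.refl _⟩
      rw [h, Finset.mem_compl] at hxS
      exact hxS hx
  constructor
  · intro hr
    rw [← hS]
    exact Finset.mem_filter.mpr ⟨Finset.mem_univ y, hr⟩
  · intro hy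
    rw [← hS] at hy
    exact (Finset.mem_filter.mp hy).2

end StmtAux

/-- if `E_π` displays `π ∈ Π` in `T_Π`, then `T_Π ∖ E_π` has exactly
`|π| + 1` components and the label sets of the components are exactly
`π ∪ {∅}`. -/
theorem stmt_3 {X : Type} [Fintype X] [DecidableEq X] (hX : 2 ≤ Fintype.card X)
    (P : Multiset (Finset (Finset X))) (hP : IsPartitionSystem P)
    (hcomp : CompatibleSystem (systemSplits P))
    (T : WeakXTree X) (hT : T.splits = systemSplits P)
    (π : Finset (Finset X)) (hπ : π ∈ P)
    (E : Finset (Sym2 T.V)) (hE : T.Displays E π) :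
    Nat.card (T.G.deleteEdges (↑E : Set (Sym2 T.V))).ConnectedComponent = π.card + 1 ∧
    Set.range (fun c : (T.G.deleteEdges (↑E : Set (Sym2 T.V))).ConnectedComponent =>
        Finset.univ.filter (fun x : X =>
          (T.G.deleteEdges (↑E : Set (Sym2 T.V))).connectedComponentMk (T.lab x) = c))
      = insert (∅ : Finset X) (↑π : Set (Finset X)) := by
  classical
  obtain ⟨hEsub, ξ, hbij, hsplit⟩ := hE
  obtain ⟨⟨hne, hux⟩, hcard2⟩ := hP π hπ
  set G' := T.G.deleteEdges (↑E : Set (Sym2 T.V)) with hG'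
  have huniqpart : ∀ {x : X} {A B : Finset X}, A ∈ π → B ∈ π → x ∈ A → x ∈ B → A = B := by
    intro x A B hA hB hxA hxB
    obtain ⟨C, -, hC⟩ := hux x
    rw [hC A ⟨hA, hxA⟩, hC B ⟨hB, hxB⟩]
  have hcardE : E.card = π.card := by
    symm
    apply Finset.card_bij (fun A _ => ξ A)
    · intro A hA
      exact hbij.mapsTo hA
    · intro A hA B hB h
      exact hbij.injOn hA hB h
    · intro e he
      obtain ⟨A, hA, rfl⟩ := hbij.surjOn he
      exact ⟨A, hA, rfl⟩
  have hcount : Nat.card G'.ConnectedComponent = π.card + 1 := by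
    rw [hG', StmtAux.card_cc_deleteEdges T.isTree E hEsub, hcardE]
  have hside : ∀ (x : X) (A : Finset X), A ∈ π → x ∈ A →
      (Finset.univ.filter (fun y : X => G'.connectedComponentMk (T.lab y)
        = G'.connectedComponentMk (T.lab x))) = A := by
    intro x A hA hxA
    ext y
    simp only [Finset.mem_filter, Finset.mem_univ, true_and]
    constructor
    · intro h
      have hr : (T.G.deleteEdges {ξ A}).Reachable (T.lab x) (T.lab y) := by
        refine StmtAux.reach_delete_mono ?_
          ((SimpleGraph.ConnectedComponent.exact h).symm)
        intro z hz
        rw [Set.mem_singleton_iff] at hz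
        subst hz
        exact hbij.mapsTo hA
      exact (StmtAux.side_of_split T (ξ A) A (hsplit A hA) hxA y).mp hr
    · intro hyA
      have hr : G'.Reachable (T.lab x) (T.lab y) := by
        rw [hG', StmtAux.reachable_deleteEdges_iff T.isTree]
        intro e he
        obtain ⟨B, hB, rfl⟩ := hbij.surjOn he
        rw [Finset.mem_coe] at hB
        by_cases hxB : x ∈ B
        · have hyB : y ∈ B := by
            rw [← huniqpart hA hB hxA hxB]
            exact hyA
          exact (StmtAux.side_of_split T (ξ B) B (hsplit B hB) hxB y).mpr hyB
        · have hx' : x ∈ Bᶜ := Finset.mem_compl.mpr hxB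
          have hy' : y ∈ Bᶜ := by
            rw [Finset.mem_compl]
            intro hyB
            exact hxB (huniqpart hB hA hyB hyA ▸ hxA)
          have hsp' : T.splitOf (ξ B) = {Bᶜ, Bᶜᶜ} := by
            rw [compl_compl, Finset.pair_comm]
            exact hsplit B hB
          exact (StmtAux.side_of_split T (ξ B) Bᶜ hsp' hx' y).mpr hy'
      exact (SimpleGraph.ConnectedComponent.sound hr).symm
  refine ⟨hcount, ?_⟩
  ext S
  simp only [Set.mem_range, Set.mem_insert_iff, Finset.mem_coe]
  constructor
  · rintro ⟨c, rfl⟩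
    by_cases hcS : (Finset.univ.filter fun x : X =>
        G'.connectedComponentMk (T.lab x) = c) = ∅
    · exact Or.inl hcS
    · right
      obtain ⟨x, hx⟩ := Finset.nonempty_iff_ne_empty.mpr hcS
      rw [Finset.mem_filter] at hx
      obtain ⟨A, ⟨hA, hxA⟩, -⟩ := hux x
      rw [← hx.2, hside x A hA hxA]
      exact hA
  · rintro (rfl | hS)
    · by_contra hno
      push_neg at hno
      haveI : Fintype G'.ConnectedComponent := Fintype.ofFinite _
      have hlab : ∀ c : G'.ConnectedComponent,
          (Finset.univ.filter fun x : X =>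
            G'.connectedComponentMk (T.lab x) = c) ∈ π := by
        intro c
        have hne' : (Finset.univ.filter fun x : X =>
            G'.connectedComponentMk (T.lab x) = c) ≠ ∅ := by
          intro h
          exact Finset.nonempty_iff_ne_empty.mp (hno c) h
        obtain ⟨x, hx⟩ := Finset.nonempty_iff_ne_empty.mpr hne'
        rw [Finset.mem_filter] at hx
        obtain ⟨A, ⟨hA, hxA⟩, -⟩ := hux x
        rw [← hx.2, hside x A hA hxA]
        exact hA
      have hinj : Function.Injective (fun c : G'.ConnectedComponent =>
          (⟨_, hlab c⟩ : {A : Finset X // A ∈ π})) := by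
        intro c1 c2 h
        rw [Subtype.mk_eq_mk] at h
        have hne1 : (Finset.univ.filter fun x : X =>
            G'.connectedComponentMk (T.lab x) = c1) ≠ ∅ := by
          intro hh
          exact Finset.nonempty_iff_ne_empty.mp (hno c1) hh
        obtain ⟨x, hx⟩ := Finset.nonempty_iff_ne_empty.mpr hne1
        have hx2 : x ∈ (Finset.univ.filter fun x : X =>
            G'.connectedComponentMk (T.lab x) = c2) := by
          rw [← h]
          exact hx
        rw [Finset.mem_filter] at hx hx2
        rw [← hx.2, hx2.2]
      have hle := Fintype.card_le_of_injective _ hinj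
      have hπcard : Fintype.card {A : Finset X // A ∈ π} = π.card := Fintype.card_coe π
      rw [hπcard, ← Nat.card_eq_fintype_card, hcount] at hle
      omega
    · obtain ⟨x, hxS⟩ := hne S hS
      exact ⟨G'.connectedComponentMk (T.lab x), hside x S hS hxS⟩
end

section
/- Let Π be a compatible partition system on X, let π ∈ Π, and let E_π be a subset of edges of T_Π = (T;φ) that displays π. Then for every pair of labelled vertices u and v of T_Π, the path in T_Π joining u and v contains exactly 0 or exactly 2 edges of E_π. -/
open scoped Classical

variable {X : Type} [Fintype X] [DecidableEq X]

section Aux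

variable {V : Type} {G : SimpleGraph V}

lemma aux_walk_cases {a b : V} :
    ∀ {u v : V}, G.Walk u v →
      (G.deleteEdges {s(a,b)}).Reachable u v ∨
      ((G.deleteEdges {s(a,b)}).Reachable u a ∧ (G.deleteEdges {s(a,b)}).Reachable b v) ∨
      ((G.deleteEdges {s(a,b)}).Reachable u b ∧ (G.deleteEdges {s(a,b)}).Reachable a v) := by
  intro u v q
  induction q with
  | nil => exact Or.inl (SimpleGraph.Reachable.refl _)
  | @cons u w v h q ih =>
    by_cases he : s(u, w) = s(a, b)
    · rw [Sym2.eq_iff] at he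
      rcases he with ⟨rfl, rfl⟩ | ⟨rfl, rfl⟩
      · rcases ih with h1 | ⟨h1, h2⟩ | ⟨h1, h2⟩
        · exact Or.inr (Or.inl ⟨SimpleGraph.Reachable.refl _, h1⟩)
        · exact Or.inr (Or.inl ⟨SimpleGraph.Reachable.refl _, h2⟩)
        · exact Or.inl h2
      · rcases ih with h1 | ⟨h1, h2⟩ | ⟨h1, h2⟩
        · exact Or.inr (Or.inr ⟨SimpleGraph.Reachable.refl _, h1⟩)
        · exact Or.inl h2
        · exact Or.inr (Or.inr ⟨SimpleGraph.Reachable.refl _, h2⟩)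
    · have hr : (G.deleteEdges {s(a,b)}).Reachable u w :=
        (SimpleGraph.deleteEdges_adj.mpr ⟨h, by simpa using he⟩).reachable
      rcases ih with h1 | ⟨h1, h2⟩ | ⟨h1, h2⟩
      · exact Or.inl (hr.trans h1)
      · exact Or.inr (Or.inl ⟨hr.trans h1, h2⟩)
      · exact Or.inr (Or.inr ⟨hr.trans h1, h2⟩)

lemma aux_parity {a b : V} (hbr : ¬ (G.deleteEdges {s(a,b)}).Reachable a b)
    (hside : ∀ v : V, (G.deleteEdges {s(a,b)}).Reachable a v ∨
      (G.deleteEdges {s(a,b)}).Reachable b v) :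
    ∀ {u v : V} (q : G.Walk u v),
      (G.deleteEdges {s(a,b)}).Reachable u v ↔ Even (q.edges.count s(a,b)) := by
  intro u v q
  induction q with
  | nil =>
    simp only [SimpleGraph.Walk.edges_nil, List.count_nil]
    exact iff_of_true (SimpleGraph.Reachable.refl _) Even.zero
  | @cons u w v h q ih =>
    rw [SimpleGraph.Walk.edges_cons, List.count_cons]
    simp only [beq_iff_eq]
    by_cases he : s(u, w) = s(a, b)
    · rw [if_pos he, Nat.even_add_one, ← ih]
      rw [Sym2.eq_iff] at he
      rcases he with ⟨rfl, rfl⟩ | ⟨rfl, rfl⟩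
      · constructor
        · intro hav hbv
          exact hbr (hav.trans hbv.symm)
        · intro hbv
          rcases hside v with h' | h'
          · exact h'
          · exact absurd h' hbv
      · constructor
        · intro hbv hav
          exact hbr (hav.trans hbv.symm)
        · intro hav
          rcases hside v with h' | h'
          · exact absurd h' hav
          · exact h'
    · have hr : (G.deleteEdges {s(a,b)}).Reachable u w :=
        (SimpleGraph.deleteEdges_adj.mpr ⟨h, by simpa using he⟩).reachable
      rw [if_neg he, Nat.add_zero, ← ih]
      exact ⟨fun huv => hr.symm.trans huv, fun hwv => hr.trans hwv⟩

lemma aux_mem_edges_iff (hT : G.IsTree) {e : Sym2 V} (he : e ∈ G.edgeSet)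
    {u v : V} (p : G.Walk u v) (hp : p.IsPath) :
    e ∈ p.edges ↔ ¬ (G.deleteEdges {e}).Reachable u v := by
  induction e using Sym2.ind with
  | _ a b =>
  rw [SimpleGraph.mem_edgeSet] at he
  have hbr : ¬ (G.deleteEdges {s(a,b)}).Reachable a b := by
    have := (SimpleGraph.isAcyclic_iff_forall_adj_isBridge.mp hT.IsAcyclic) he
    exact this
  have hside : ∀ w : V, (G.deleteEdges {s(a,b)}).Reachable a w ∨
      (G.deleteEdges {s(a,b)}).Reachable b w := by
    intro w
    rcases aux_walk_cases ((hT.isConnected a w).some) with h1 | ⟨h1, h2⟩ | ⟨h1, h2⟩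
    · exact Or.inl h1
    · exact Or.inr h2
    · exact absurd h1 hbr
  rw [aux_parity hbr hside p]
  have hle : p.edges.count s(a,b) ≤ 1 := List.nodup_iff_count_le_one.mp hp.edges_nodup _
  constructor
  · intro hmem
    have : p.edges.count s(a,b) = 1 := le_antisymm hle (List.count_pos_iff.mpr hmem)
    simp [this]
  · intro hnev
    by_contra hmem
    have : p.edges.count s(a,b) = 0 := List.count_eq_zero.mpr hmem
    simp [this] at hnev

lemma aux_countP {α : Type} [DecidableEq α] (l : List α) (hl : l.Nodup) (s : Finset α) :
    l.countP (fun f => decide (f ∈ s)) = (l.toFinset ∩ s).card := by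
  induction l with
  | nil => simp
  | cons a t ih =>
    rw [List.nodup_cons] at hl
    obtain ⟨ha, ht⟩ := hl
    rw [List.countP_cons, List.toFinset_cons, ih ht]
    by_cases h : a ∈ s
    · rw [Finset.insert_inter_of_mem h]
      rw [Finset.card_insert_of_notMem (by simp [ha])]
      simp [h]
    · rw [Finset.insert_inter_of_notMem h]
      simp [h]

end Aux

lemma aux_reach_iff {X : Type} [Fintype X] [DecidableEq X] (T : WeakXTree X)
    {e : Sym2 T.V} {A : Finset X} (hsplit : T.splitOf e = {A, Aᶜ}) (x y : X) :
    (T.G.deleteEdges {e}).Reachable (T.lab x) (T.lab y) ↔ ((x ∈ A) ↔ (y ∈ A)) := by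
  set S : T.V → Finset X := fun z => Finset.univ.filter
    (fun t : X => (T.G.deleteEdges {e}).Reachable z (T.lab t)) with hSdef
  have hSmem : ∀ z : T.V, S z ∈ ({A, Aᶜ} : Finset (Finset X)) := by
    intro z
    rw [← hsplit]
    exact Finset.mem_image_of_mem _ (Finset.mem_univ z)
  have hself : ∀ z : X, z ∈ S (T.lab z) := fun z =>
    Finset.mem_filter.mpr ⟨Finset.mem_univ z, SimpleGraph.Reachable.refl _⟩
  have hkeyA : ∀ z : X, z ∈ A → S (T.lab z) = A := by
    intro z hz
    rcases Finset.mem_insert.mp (hSmem (T.lab z)) with h | h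
    · exact h
    · rw [Finset.mem_singleton] at h
      exfalso
      have := hself z
      rw [h, Finset.mem_compl] at this
      exact this hz
  have hkeyC : ∀ z : X, z ∉ A → S (T.lab z) = Aᶜ := by
    intro z hz
    rcases Finset.mem_insert.mp (hSmem (T.lab z)) with h | h
    · exact absurd (h ▸ hself z) hz
    · exact Finset.mem_singleton.mp h
  constructor
  · intro hr
    have hSeq : S (T.lab x) = S (T.lab y) := by
      ext t
      simp only [hSdef, Finset.mem_filter, Finset.mem_univ, true_and]
      exact ⟨fun h => hr.symm.trans h, fun h => hr.trans h⟩
    have himp : ∀ z w : X, S (T.lab z) = S (T.lab w) → z ∈ A → w ∈ A := by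
      intro z w hS hz
      have hw := hself w
      rw [← hS, hkeyA z hz] at hw
      exact hw
    exact ⟨himp x y hSeq, himp y x hSeq.symm⟩
  · intro hiff
    by_cases hx : x ∈ A
    · have : y ∈ S (T.lab x) := by rw [hkeyA x hx]; exact hiff.mp hx
      exact (Finset.mem_filter.mp this).2
    · have : y ∈ S (T.lab x) := by
        rw [hkeyC x hx]
        exact Finset.mem_compl.mpr (fun h => hx (hiff.mpr h))
      exact (Finset.mem_filter.mp this).2


/-- if `E_π` displays `π ∈ Π` in `T_Π`, then the path joining any
two labelled vertices contains exactly `0` or exactly `2` edges of `E_π`. -/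
theorem stmt_4 {X : Type} [Fintype X] [DecidableEq X] (hX : 2 ≤ Fintype.card X)
    (P : Multiset (Finset (Finset X))) (hP : IsPartitionSystem P)
    (hcomp : CompatibleSystem (systemSplits P))
    (T : WeakXTree X) (hT : T.splits = systemSplits P)
    (π : Finset (Finset X)) (hπ : π ∈ P)
    (E : Finset (Sym2 T.V)) (hE : T.Displays E π) :
    ∀ (u v : T.V), u ∈ Set.range T.lab → v ∈ Set.range T.lab →
      ∀ p : T.G.Walk u v, p.IsPath →
        p.edges.countP (fun f => decide (f ∈ E)) = 0 ∨
        p.edges.countP (fun f => decide (f ∈ E)) = 2 := by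
  intro u v hu hv p hp
  obtain ⟨x, rfl⟩ := hu
  obtain ⟨y, rfl⟩ := hv
  obtain ⟨hEsub, ξ, hbij, hsp⟩ := hE
  have hπpart : IsPartition π := (hP π hπ).1
  obtain ⟨Ax, ⟨hAxπ, hxAx⟩, huAx⟩ := hπpart.2 x
  obtain ⟨Ay, ⟨hAyπ, hyAy⟩, huAy⟩ := hπpart.2 y
  set 𝒜 : Finset (Finset X) := π.filter (fun A => ¬((x ∈ A) ↔ (y ∈ A))) with h𝒜
  have hcount : p.edges.countP (fun f => decide (f ∈ E)) = 𝒜.card := by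
    rw [aux_countP p.edges hp.edges_nodup E]
    rw [← Finset.card_image_of_injOn
      (hbij.injOn.mono (Finset.coe_subset.mpr (Finset.filter_subset _ _)))]
    congr 1
    ext f
    simp only [Finset.mem_inter, List.mem_toFinset, Finset.mem_image]
    constructor
    · rintro ⟨hfp, hfE⟩
      obtain ⟨A, hAπ, rfl⟩ := hbij.surjOn (Finset.mem_coe.mpr hfE)
      have hAπ' : A ∈ π := hAπ
      refine ⟨A, Finset.mem_filter.mpr ⟨hAπ', ?_⟩, rfl⟩
      rw [aux_mem_edges_iff T.isTree (hEsub (hbij.mapsTo hAπ)) p hp] at hfp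
      exact fun hiff => hfp ((aux_reach_iff T (hsp A hAπ') x y).mpr hiff)
    · rintro ⟨A, hA𝒜, rfl⟩
      rw [Finset.mem_filter] at hA𝒜
      obtain ⟨hAπ, hAne⟩ := hA𝒜
      have hAπ' : A ∈ (↑π : Set (Finset X)) := hAπ
      refine ⟨?_, Finset.mem_coe.mp (hbij.mapsTo hAπ')⟩
      rw [aux_mem_edges_iff T.isTree (hEsub (hbij.mapsTo hAπ')) p hp]
      exact fun hr => hAne ((aux_reach_iff T (hsp A hAπ) x y).mp hr)
  rw [hcount]
  by_cases hxy : Ax = Ay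
  · left
    rw [Finset.card_eq_zero]
    ext A
    simp only [h𝒜, Finset.mem_filter, Finset.notMem_empty, iff_false, not_and]
    intro hAπ hAne
    apply hAne
    constructor
    · intro hxA
      have hA : A = Ax := huAx A ⟨hAπ, hxA⟩
      rw [hA, hxy]
      exact hyAy
    · intro hyA
      have hA : A = Ay := huAy A ⟨hAπ, hyA⟩
      rw [hA, ← hxy]
      exact hxAx
  · right
    have h2 : 𝒜 = {Ax, Ay} := by
      ext A
      simp only [h𝒜, Finset.mem_filter, Finset.mem_insert, Finset.mem_singleton]
      constructor
      · rintro ⟨hAπ, hAne⟩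
        by_cases hxA : x ∈ A
        · exact Or.inl (huAx A ⟨hAπ, hxA⟩)
        · have hyA : y ∈ A := by
            by_contra h
            exact hAne (iff_of_false hxA h)
          exact Or.inr (huAy A ⟨hAπ, hyA⟩)
      · rintro (rfl | rfl)
        · exact ⟨hAxπ, fun hiff => hxy (huAy A ⟨hAxπ, hiff.mp hxAx⟩)⟩
        · exact ⟨hAyπ, fun hiff => hxy ((huAx A ⟨hAyπ, hiff.mpr hyAy⟩).symm)⟩
    rw [h2, Finset.card_insert_of_notMem (by simpa using hxy), Finset.card_singleton]
end

section
/- Let Σ be a compatible split system on X and let Π be any partition system on X with Σ_Π = Σ. Then Δ(T_Σ) ≤ 2|Π|, where Δ(T_Σ) is the diameter of the tree T_Σ and |Π| is the total size of the multiset Π. -/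
open scoped Classical

variable {X : Type} [Fintype X] [DecidableEq X]

section Aux

open SimpleGraph

lemma cross_aux {V : Type*} {G : SimpleGraph V} {u v : V} (p : G.Walk u v)
    (hp : p.IsTrail) {a b : V} (he : s(a, b) ∈ p.edges) :
    ((G.deleteEdges {s(a, b)}).Reachable u a ∧ (G.deleteEdges {s(a, b)}).Reachable b v) ∨
    ((G.deleteEdges {s(a, b)}).Reachable u b ∧ (G.deleteEdges {s(a, b)}).Reachable a v) := by
  induction p with
  | nil => simp at he
  | @cons u w v h q ih =>
    rw [SimpleGraph.Walk.isTrail_cons] at hp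
    rw [SimpleGraph.Walk.edges_cons, List.mem_cons] at he
    rcases he with he | he
    · have hq : ∀ e' ∈ q.edges, e' ∉ ({s(a, b)} : Set (Sym2 V)) := by
        intro e' h' hmem
        rw [Set.mem_singleton_iff] at hmem
        subst hmem
        exact hp.2 (he ▸ h')
      have hwv : (G.deleteEdges {s(a, b)}).Reachable w v := ⟨q.toDeleteEdges _ hq⟩
      rw [Sym2.eq_iff] at he
      rcases he with ⟨rfl, rfl⟩ | ⟨rfl, rfl⟩
      · exact Or.inl ⟨Reachable.refl _, hwv⟩
      · exact Or.inr ⟨Reachable.refl _, hwv⟩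
    · have hadj : (G.deleteEdges {s(a, b)}).Adj u w := by
        rw [SimpleGraph.deleteEdges_adj]
        refine ⟨h, ?_⟩
        intro hmem
        rw [Set.mem_singleton_iff] at hmem
        exact hp.2 (hmem ▸ he)
      rcases ih hp.1 he with ⟨h1, h2⟩ | ⟨h1, h2⟩
      · exact Or.inl ⟨hadj.reachable.trans h1, h2⟩
      · exact Or.inr ⟨hadj.reachable.trans h1, h2⟩

lemma part_aux {X : Type} [Fintype X] [DecidableEq X] (x y : X) {π : Finset (Finset X)}
    (hπ : IsPartition π) :
    Multiset.card ((partitionSplits π).filter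
      (fun σ => ∃ C ∈ σ, x ∈ C ∧ y ∉ C)) ≤ 2 := by
  obtain ⟨Ax, ⟨hAxm, hAx⟩, hux⟩ := hπ.2 x
  obtain ⟨Ay, ⟨hAym, hAy⟩, huy⟩ := hπ.2 y
  rw [partitionSplits, Multiset.filter_map, Multiset.card_map]
  have hnd : (π.val.filter ((fun σ => ∃ C ∈ σ, x ∈ C ∧ y ∉ C) ∘
      (fun A => ({A, Aᶜ} : Finset (Finset X))))).Nodup := π.nodup.filter _
  have hsub : (π.val.filter ((fun σ => ∃ C ∈ σ, x ∈ C ∧ y ∉ C) ∘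
      (fun A => ({A, Aᶜ} : Finset (Finset X))))) ⊆ (Ax ::ₘ {Ay}) := by
    intro A hA
    rw [Multiset.mem_filter] at hA
    obtain ⟨hAπ, C, hC, hxC, hyC⟩ := hA
    rw [Finset.mem_insert, Finset.mem_singleton] at hC
    rw [Multiset.mem_cons, Multiset.mem_singleton]
    rcases hC with rfl | rfl
    · exact Or.inl (hux C ⟨hAπ, hxC⟩)
    · rw [Finset.mem_compl, not_not] at hyC
      exact Or.inr (huy _ ⟨hAπ, hyC⟩)
  have := Multiset.card_le_card ((Multiset.le_iff_subset hnd).mpr hsub)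
  simpa using this

lemma count_aux {X : Type} [Fintype X] [DecidableEq X] (x y : X)
    (P : Multiset (Finset (Finset X))) (hP : ∀ π ∈ P, IsPartition π) :
    Multiset.card ((systemSplits P).filter (fun σ => ∃ C ∈ σ, x ∈ C ∧ y ∉ C))
      ≤ 2 * Multiset.card P := by
  induction P using Multiset.induction with
  | empty => simp [systemSplits]
  | cons π s ih =>
    rw [systemSplits, Multiset.cons_bind, Multiset.filter_add, Multiset.card_add,
      Multiset.card_cons]
    have h1 := part_aux x y (hP π (Multiset.mem_cons_self _ _))
    have h2 := ih (fun π' h => hP π' (Multiset.mem_cons_of_mem h))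
    rw [systemSplits] at h2
    omega

end Aux

/-- for a compatible split system `Σ` and any partition system `Π`
with `Σ_Π = Σ`, the diameter of `T_Σ` (the largest distance between two leaves)
is at most `2|Π|`. -/
theorem stmt_5 {X : Type} [Fintype X] [DecidableEq X] (hX : 2 ≤ Fintype.card X)
    (S : Multiset (Finset (Finset X))) (hS : IsSplitSystem S)
    (hcomp : CompatibleSystem S)
    (T : WeakXTree X) (hT : T.splits = S)
    (P : Multiset (Finset (Finset X))) (hP : IsPartitionSystem P)
    (hPS : systemSplits P = S) :
    ∀ u v : T.V, T.IsLeaf u → T.IsLeaf v → T.G.dist u v ≤ 2 * Multiset.card P := by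
  intro u v hu hv
  classical
  obtain ⟨x, hx⟩ := T.leaf_labelled u hu
  obtain ⟨y, hy⟩ := T.leaf_labelled v hv
  obtain ⟨w0⟩ := T.isTree.isConnected.preconnected u v
  set p : T.G.Path u v := w0.toPath with hpdef
  have hnodup : p.1.edges.Nodup := p.2.isTrail.edges_nodup
  set Cross : Finset (Finset X) → Prop := fun σ => ∃ C ∈ σ, x ∈ C ∧ y ∉ C with hCross
  set m : Multiset (Finset (Finset X)) := (p.1.edges.toFinset).val.map T.splitOf with hm
  have hsubE : p.1.edges.toFinset ⊆ T.G.edgeFinset := by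
    intro e he
    rw [List.mem_toFinset] at he
    rw [SimpleGraph.mem_edgeFinset]
    exact p.1.edges_subset_edgeSet he
  have hle : m ≤ systemSplits P := by
    rw [hPS, ← hT]
    exact Multiset.map_le_map (Finset.val_le_iff.mpr hsubE)
  have hall : ∀ σ ∈ m, Cross σ := by
    intro σ hσ
    obtain ⟨e, he, rfl⟩ := Multiset.mem_map.mp hσ
    rw [Finset.mem_val, List.mem_toFinset] at he
    induction e using Sym2.ind with
    | _ a b =>
      have hmemE : s(a, b) ∈ T.G.edgeSet := p.1.edges_subset_edgeSet he
      have hbridge : T.G.IsBridge s(a, b) :=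
        SimpleGraph.isAcyclic_iff_forall_edge_isBridge.mp T.isTree.IsAcyclic hmemE
      have nreach : ¬ (T.G.deleteEdges {s(a, b)}).Reachable a b :=
        (SimpleGraph.isBridge_iff.mp hbridge)
      rcases cross_aux p.1 p.2.isTrail he with ⟨h1, h2⟩ | ⟨h1, h2⟩
      · refine ⟨_, Finset.mem_image_of_mem _ (Finset.mem_univ a), ?_, ?_⟩
        · rw [Finset.mem_filter]
          exact ⟨Finset.mem_univ x, hx ▸ h1.symm⟩
        · intro hmem
          rw [Finset.mem_filter] at hmem
          have : (T.G.deleteEdges {s(a, b)}).Reachable a v := hy ▸ hmem.2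
          exact nreach (this.trans h2.symm)
      · refine ⟨_, Finset.mem_image_of_mem _ (Finset.mem_univ b), ?_, ?_⟩
        · rw [Finset.mem_filter]
          exact ⟨Finset.mem_univ x, hx ▸ h1.symm⟩
        · intro hmem
          rw [Finset.mem_filter] at hmem
          have : (T.G.deleteEdges {s(a, b)}).Reachable b v := hy ▸ hmem.2
          exact nreach ((this.trans h2.symm).symm)
  calc T.G.dist u v ≤ p.1.length := SimpleGraph.dist_le p.1
    _ = p.1.edges.length := (SimpleGraph.Walk.length_edges _).symm
    _ = p.1.edges.toFinset.card := (List.toFinset_card_of_nodup hnodup).symm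
    _ = Multiset.card m := by rw [hm, Multiset.card_map, Finset.card_val]
    _ = Multiset.card (m.filter Cross) := by rw [Multiset.filter_eq_self.mpr hall]
    _ ≤ Multiset.card ((systemSplits P).filter Cross) :=
        Multiset.card_le_card (Multiset.filter_le_filter _ hle)
    _ ≤ 2 * Multiset.card P := count_aux x y P (fun π h => (hP π h).1)
end
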